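/- arXiv:1606.07118 — 4 statements merged into one kernel-verified Lean document; each statement's English description precedes it below -/
import Mathlib

section
/- For every integer n ≥ 1, ∫_{0 ≤ s₁ ≤ s₂ ≤ ⋯ ≤ sₙ ≤ 1} ds₁⋯dsₙ / √(s₁(s₂−s₁)⋯(sₙ−s_{n−1})) = π^{n/2} / Γ(n/2 + 1). -/
open MeasureTheory Set

namespace SimplexSqrtAux

variable {n : ℕ}

/-- The "previous value" function appearing in the statement. -/
noncomputable def prev (s : Fin n → ℝ) (i : Fin n) : ℝ :=
  if (i : ℕ) = 0 then 0 else s ⟨(i : ℕ) - 1, lt_of_le_of_lt (Nat.sub_le _ _) i.isLt⟩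

/-- Cumulative sums of squares. -/
noncomputable def phi (n : ℕ) (x : Fin n → ℝ) : Fin n → ℝ :=
  fun i => ∑ j ∈ Finset.Iic i, x j ^ 2

def U (n : ℕ) : Set (Fin n → ℝ) := {x | (∀ i, 0 < x i) ∧ ∑ i, x i ^ 2 < 1}

def T (n : ℕ) : Set (Fin n → ℝ) :=
  {s | (∀ i j : Fin n, i < j → s i < s j) ∧ (∀ i, 0 < s i) ∧ (∀ i, s i < 1)}

def B (n : ℕ) : Set (Fin n → ℝ) := {x | ∑ i, x i ^ 2 < 1}

def S (n : ℕ) : Set (Fin n → ℝ) :=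
  {s | (∀ i j : Fin n, i ≤ j → s i ≤ s j) ∧ (∀ i, 0 ≤ s i) ∧ (∀ i, s i ≤ 1)}

lemma Iic_eq_singleton {i : Fin n} (h : (i : ℕ) = 0) : Finset.Iic i = {i} := by
  ext j
  simp only [Finset.mem_Iic, Finset.mem_singleton, Fin.le_def, Fin.ext_iff]
  omega

lemma Iic_eq_insert {i : Fin n} (h : (i : ℕ) ≠ 0) :
    Finset.Iic i = insert i (Finset.Iic ⟨(i : ℕ) - 1, lt_of_le_of_lt (Nat.sub_le _ _) i.isLt⟩) := by
  ext j
  simp only [Finset.mem_Iic, Finset.mem_insert, Fin.le_def, Fin.ext_iff]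
  omega

lemma not_mem_Iic_pred {i : Fin n} (h : (i : ℕ) ≠ 0) :
    i ∉ Finset.Iic (⟨(i : ℕ) - 1, lt_of_le_of_lt (Nat.sub_le _ _) i.isLt⟩ : Fin n) := by
  simp only [Finset.mem_Iic, Fin.le_def]
  omega

lemma phi_gap (x : Fin n → ℝ) (i : Fin n) : phi n x i - prev (phi n x) i = x i ^ 2 := by
  unfold prev phi
  by_cases h : (i : ℕ) = 0
  · rw [if_pos h, Iic_eq_singleton h, Finset.sum_singleton, sub_zero]
  · rw [if_neg h, Iic_eq_insert h, Finset.sum_insert (not_mem_Iic_pred h)]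
    ring

lemma injOn_phi : Set.InjOn (phi n) (U n) := by
  intro x hx y hy hxy
  funext i
  have h1 : x i ^ 2 = y i ^ 2 := by
    rw [← phi_gap x i, ← phi_gap y i, hxy]
  have hx' := hx.1 i
  have hy' := hy.1 i
  nlinarith

lemma phi_image : phi n '' (U n) = T n := by
  ext s
  constructor
  · rintro ⟨x, hx, rfl⟩
    obtain ⟨hpos, hsum⟩ := hx
    refine ⟨?_, ?_, ?_⟩
    · intro i j hij
      apply Finset.sum_lt_sum_of_subset (Finset.Iic_subset_Iic.mpr (le_of_lt hij))
        (Finset.mem_Iic.mpr (le_refl j)) (by simpa [Finset.mem_Iic] using not_le.mpr hij)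
      · exact pow_pos (hpos j) 2
      · intro k _ _; positivity
    · intro i
      apply Finset.sum_pos (fun k _ => pow_pos (hpos k) 2)
      exact ⟨i, Finset.mem_Iic.mpr (le_refl i)⟩
    · intro i
      refine lt_of_le_of_lt ?_ hsum
      exact Finset.sum_le_sum_of_subset_of_nonneg (Finset.subset_univ _)
        (fun k _ _ => by positivity)
  · rintro ⟨hmono, hpos, hlt⟩
    set x : Fin n → ℝ := fun i => Real.sqrt (s i - prev s i) with hxdef
    have hgap : ∀ i : Fin n, 0 < s i - prev s i := by
      intro i
      unfold prev
      by_cases h : (i : ℕ) = 0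
      · rw [if_pos h]; simpa using hpos i
      · rw [if_neg h]
        have : (⟨(i : ℕ) - 1, lt_of_le_of_lt (Nat.sub_le _ _) i.isLt⟩ : Fin n) < i := by
          rw [Fin.lt_def]; simp; omega
        linarith [hmono _ i this]
    have hxpos : ∀ i, 0 < x i := fun i => Real.sqrt_pos.mpr (hgap i)
    have hxsq : ∀ i, x i ^ 2 = s i - prev s i := fun i => Real.sq_sqrt (le_of_lt (hgap i))
    have key : ∀ m (hm : m < n), phi n x ⟨m, hm⟩ = s ⟨m, hm⟩ := by
      intro m
      induction m with
      | zero =>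
        intro hm
        rw [phi, Iic_eq_singleton rfl, Finset.sum_singleton, hxsq]
        simp [prev]
      | succ k ih =>
        intro hm
        have hk : k < n := Nat.lt_of_succ_lt hm
        have hne : ((⟨k + 1, hm⟩ : Fin n) : ℕ) ≠ 0 := by simp
        rw [phi, Iic_eq_insert hne, Finset.sum_insert (not_mem_Iic_pred hne)]
        have hpred : (⟨((⟨k + 1, hm⟩ : Fin n) : ℕ) - 1,
            lt_of_le_of_lt (Nat.sub_le _ _) (⟨k + 1, hm⟩ : Fin n).isLt⟩ : Fin n) = ⟨k, hk⟩ := by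
          simp
        rw [hpred]
        have : (∑ j ∈ Finset.Iic (⟨k, hk⟩ : Fin n), x j ^ 2) = s ⟨k, hk⟩ := ih hk
        rw [this, hxsq]
        have hprev : prev s ⟨k + 1, hm⟩ = s ⟨k, hk⟩ := by
          unfold prev
          rw [if_neg hne, show (⟨((⟨k + 1, hm⟩ : Fin n) : ℕ) - 1,
            lt_of_le_of_lt (Nat.sub_le _ _) (⟨k + 1, hm⟩ : Fin n).isLt⟩ : Fin n) = ⟨k, hk⟩ from by
              simp]
        rw [hprev]
        ring
    have hphi : phi n x = s := by
      funext i
      obtain ⟨m, hm⟩ := i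
      exact key m hm
    by_cases hn : n = 0
    · subst hn
      exact ⟨x, ⟨fun i => i.elim0, by simp⟩, hphi⟩
    · refine ⟨x, ⟨hxpos, ?_⟩, hphi⟩
      have hlast : (Finset.univ : Finset (Fin n)) = Finset.Iic ⟨n - 1, by omega⟩ := by
        ext j
        simp only [Finset.mem_univ, Finset.mem_Iic, Fin.le_def, true_iff]
        have := j.isLt
        simp; omega
      calc ∑ i, x i ^ 2 = phi n x ⟨n - 1, by omega⟩ := by rw [phi, hlast]
        _ = s ⟨n - 1, by omega⟩ := by rw [hphi]
        _ < 1 := hlt _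

noncomputable def D (n : ℕ) (x : Fin n → ℝ) : (Fin n → ℝ) →L[ℝ] (Fin n → ℝ) :=
  ContinuousLinearMap.pi fun i => ∑ j ∈ Finset.Iic i, (2 * x j) • ContinuousLinearMap.proj j

open ContinuousLinearMap in
lemma hasFDerivAt_phi (x : Fin n → ℝ) : HasFDerivAt (phi n) (D n x) x := by
  apply hasFDerivAt_pi''
  intro i
  have : ∀ j : Fin n, HasFDerivAt (fun y : Fin n → ℝ => y j ^ 2)
      ((2 * x j) • (ContinuousLinearMap.proj j : (Fin n → ℝ) →L[ℝ] ℝ)) x := by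
    intro j
    have hp := (ContinuousLinearMap.proj j : (Fin n → ℝ) →L[ℝ] ℝ).hasFDerivAt (x := x)
    have h := hp.mul hp
    have h2 : HasFDerivAt (fun y : Fin n → ℝ => y j ^ 2)
        (x j • (proj j : (Fin n → ℝ) →L[ℝ] ℝ) + x j • (proj j : (Fin n → ℝ) →L[ℝ] ℝ)) x := by
      convert h using 2 with y
      all_goals first | rfl | (simp only [ContinuousLinearMap.proj_apply, Pi.mul_apply]; ring) | simp
    convert h2 using 1
    ext v
    simp only [ContinuousLinearMap.smul_apply, ContinuousLinearMap.add_apply,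
      ContinuousLinearMap.proj_apply, smul_eq_mul]
    ring
  have hsum := HasFDerivAt.fun_sum (fun j (_ : j ∈ Finset.Iic i) => this j)
  have h3 : HasFDerivAt (fun y => phi n y i)
      (∑ j ∈ Finset.Iic i, (2 * x j) • (proj j : (Fin n → ℝ) →L[ℝ] ℝ)) x := hsum
  exact h3

lemma det_D (x : Fin n → ℝ) : (D n x).det = ∏ i, (2 * x i) := by
  have hM : LinearMap.toMatrix (Pi.basisFun ℝ (Fin n)) (Pi.basisFun ℝ (Fin n))
      (D n x : (Fin n → ℝ) →ₗ[ℝ] (Fin n → ℝ)) =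
      fun i j => if j ≤ i then 2 * x j else 0 := by
    ext i j
    rw [LinearMap.toMatrix_apply]
    simp only [Pi.basisFun_apply, Pi.basisFun_repr, ContinuousLinearMap.coe_coe]
    simp only [D, ContinuousLinearMap.pi_apply, ContinuousLinearMap.sum_apply,
      ContinuousLinearMap.smul_apply, ContinuousLinearMap.proj_apply, smul_eq_mul]
    simp only [Pi.single_apply, mul_ite, mul_one, mul_zero]
    rw [Finset.sum_ite_eq' (Finset.Iic i) j (fun k => 2 * x k)]
    simp [Finset.mem_Iic]
  rw [ContinuousLinearMap.det, ← LinearMap.det_toMatrix (Pi.basisFun ℝ (Fin n)), hM]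
  change Matrix.det (Matrix.of fun i j => if j ≤ i then 2 * x j else 0) = _
  rw [Matrix.det_of_lowerTriangular]
  · simp
  · intro i j hij
    have : i < j := hij
    simp [not_le.mpr this]

lemma measurable_sumsq : Measurable fun x : Fin n → ℝ => ∑ i, x i ^ 2 :=
  Finset.measurable_sum _ fun i _ => (measurable_pi_apply i).pow_const 2

lemma measurableSet_B : MeasurableSet (B n) :=
  measurableSet_lt measurable_sumsq measurable_const

lemma measurableSet_U : MeasurableSet (U n) := by
  have h1 : MeasurableSet {x : Fin n → ℝ | ∀ i, 0 < x i} := by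
    rw [show {x : Fin n → ℝ | ∀ i, 0 < x i} = ⋂ i, {x | 0 < x i} by ext; simp]
    exact MeasurableSet.iInter fun i =>
      measurableSet_lt measurable_const (measurable_pi_apply i)
  exact h1.inter measurableSet_B

def sigma' (ε : Fin n → Bool) (x : Fin n → ℝ) : Fin n → ℝ :=
  fun i => if ε i then x i else -x i

lemma measurePreserving_sigma' (ε : Fin n → Bool) :
    MeasurePreserving (sigma' ε) (volume : Measure (Fin n → ℝ)) volume := by
  apply volume_preserving_pi (f := fun i (t : ℝ) => if ε i then t else -t)
  intro i
  by_cases h : ε i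
  · simp only [h, if_true]
    exact MeasurePreserving.id _
  · simp only [h, if_false]
    exact Measure.measurePreserving_neg _

def P (ε : Fin n → Bool) : Set (Fin n → ℝ) :=
  {x | (∀ i, 0 < (if ε i then x i else -x i)) ∧ ∑ i, x i ^ 2 < 1}

lemma P_eq_preimage (ε : Fin n → Bool) : P ε = sigma' ε ⁻¹' (U n) := by
  ext x
  simp only [P, U, sigma', Set.mem_preimage, Set.mem_setOf_eq]
  constructor
  · rintro ⟨h1, h2⟩
    refine ⟨h1, ?_⟩
    convert h2 using 2 with i
    by_cases h : ε i <;> simp [h]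
  · rintro ⟨h1, h2⟩
    refine ⟨h1, ?_⟩
    convert h2 using 2 with i
    by_cases h : ε i <;> simp [h]

lemma volume_P (ε : Fin n → Bool) : volume (P ε) = volume (U n) := by
  rw [P_eq_preimage]
  exact (measurePreserving_sigma' ε).measure_preimage measurableSet_U.nullMeasurableSet

lemma volume_B_eq : volume (B n) = 2 ^ n * volume (U n) := by
  have hdisj : Pairwise (Function.onFun Disjoint (P (n := n))) := by
    intro ε ε' hne
    rw [Function.onFun, Set.disjoint_left]
    intro x hx hx'
    have : ∃ i, ε i ≠ ε' i := by
      by_contra h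
      push_neg at h
      exact hne (funext h)
    obtain ⟨i, hi⟩ := this
    have h1 := hx.1 i
    have h2 := hx'.1 i
    cases hε : ε i <;> cases hε' : ε' i <;> rw [hε] at h1 <;> rw [hε'] at h2 <;>
      simp_all <;> linarith
  have hmeasP : ∀ ε : Fin n → Bool, MeasurableSet (P ε) := by
    intro ε
    rw [P_eq_preimage]
    exact measurableSet_U.preimage (measurePreserving_sigma' ε).measurable
  have hBsub : B n ⊆ (⋃ ε, P ε) ∪ (⋃ i, {x : Fin n → ℝ | x i = 0}) := by
    intro x hx
    by_cases h : ∀ i, x i ≠ 0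
    · left
      refine Set.mem_iUnion.mpr ⟨fun i => decide (0 < x i), ⟨fun i => ?_, hx⟩⟩
      by_cases hp : 0 < x i
      · simp [hp]
      · have : x i < 0 := lt_of_le_of_ne (not_lt.mp hp) (h i)
        simp [hp, this]
    · right
      push_neg at h
      obtain ⟨i, hi⟩ := h
      exact Set.mem_iUnion.mpr ⟨i, hi⟩
  have hnull : volume (⋃ i, {x : Fin n → ℝ | x i = 0}) = 0 := by
    refine measure_iUnion_null fun i => ?_
    rw [volume_pi]
    exact Measure.pi_hyperplane _ i 0
  have hsubB : (⋃ ε, P ε) ⊆ B n := by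
    rintro x hx
    obtain ⟨ε, hε⟩ := Set.mem_iUnion.mp hx
    exact hε.2
  have h1 : volume (B n) = volume (⋃ ε : Fin n → Bool, P ε) := by
    apply le_antisymm
    · calc volume (B n) ≤ volume ((⋃ ε, P ε) ∪ (⋃ i, {x : Fin n → ℝ | x i = 0})) :=
          measure_mono hBsub
        _ ≤ volume (⋃ ε, P ε) + volume (⋃ i, {x : Fin n → ℝ | x i = 0}) := measure_union_le _ _
        _ = volume (⋃ ε, P ε) := by rw [hnull, add_zero]
    · exact measure_mono hsubB
  rw [h1, measure_iUnion hdisj hmeasP]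
  simp_rw [volume_P]
  rw [tsum_fintype]
  rw [Finset.sum_const, Finset.card_univ, Fintype.card_fun, Fintype.card_bool, Fintype.card_fin]
  rw [nsmul_eq_mul]
  push_cast
  ring

lemma volume_B_value :
    volume (B n) = ENNReal.ofReal (Real.sqrt Real.pi ^ n / Real.Gamma ((n : ℝ) / 2 + 1)) := by
  have h2 : (1 : ℝ) ≤ 2 := one_le_two
  have := MeasureTheory.volume_sum_rpow_lt_one (Fin n) h2
  have hset : {x : Fin n → ℝ | ∑ i, |x i| ^ (2 : ℝ) < 1} = B n := by
    ext x
    simp only [B, Set.mem_setOf_eq]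
    congr! 2 with i
    rw [show (2 : ℝ) = ((2 : ℕ) : ℝ) by norm_num, Real.rpow_natCast, sq_abs]
  rw [hset] at this
  rw [this, Fintype.card_fin]
  congr 1
  have hΓ : Real.Gamma (1 / 2 + 1) = Real.sqrt Real.pi / 2 := by
    rw [Real.Gamma_add_one (by norm_num), Real.Gamma_one_half_eq]
    ring
  rw [hΓ, show 2 * (Real.sqrt Real.pi / 2) = Real.sqrt Real.pi by ring]

lemma volume_eval_eq_zero (i : Fin n) (c : ℝ) : volume {s : Fin n → ℝ | s i = c} = 0 := by
  rw [volume_pi]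
  exact Measure.pi_hyperplane (fun _ => (volume : Measure ℝ)) i c

lemma volume_diag_eq_zero {i j : Fin n} (hij : i ≠ j) :
    volume {s : Fin n → ℝ | s i = s j} = 0 := by
  set L : (Fin n → ℝ) →ₗ[ℝ] ℝ := (LinearMap.proj i : (Fin n → ℝ) →ₗ[ℝ] ℝ) - (LinearMap.proj j : (Fin n → ℝ) →ₗ[ℝ] ℝ) with hL
  have hset : {s : Fin n → ℝ | s i = s j} = (LinearMap.ker L : Set (Fin n → ℝ)) := by
    ext s
    simp only [Set.mem_setOf_eq, SetLike.mem_coe, LinearMap.mem_ker, hL, LinearMap.sub_apply,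
      LinearMap.proj_apply, sub_eq_zero]
  rw [hset]
  apply Measure.addHaar_submodule
  intro htop
  have : Pi.single i (1 : ℝ) ∈ LinearMap.ker L := htop ▸ Submodule.mem_top
  rw [LinearMap.mem_ker, hL] at this
  simp only [LinearMap.sub_apply, LinearMap.proj_apply, Pi.single_eq_same,
    Pi.single_eq_of_ne hij.symm, sub_zero] at this
  exact one_ne_zero this

lemma S_ae_eq_T : S n =ᵐ[volume] T n := by
  rw [MeasureTheory.ae_eq_set]
  constructor
  · -- volume (S \ T) = 0
    have hsub : S n \ T n ⊆
        (⋃ p : Fin n × Fin n, {s : Fin n → ℝ | p.1 ≠ p.2 ∧ s p.1 = s p.2}) ∪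
        ((⋃ i, {s : Fin n → ℝ | s i = 0}) ∪ (⋃ i, {s : Fin n → ℝ | s i = 1})) := by
      rintro s ⟨⟨hmono, hpos, hle⟩, hnT⟩
      simp only [T, Set.mem_setOf_eq, not_and_or, not_forall, not_lt] at hnT
      rcases hnT with ⟨i, j, hij, hji⟩ | h | h
      · exact Or.inl (Set.mem_iUnion.mpr ⟨(i, j), ne_of_lt hij,
          le_antisymm (hmono i j (le_of_lt hij)) hji⟩)
      · obtain ⟨i, hi⟩ := h
        exact Or.inr (Or.inl (Set.mem_iUnion.mpr ⟨i, le_antisymm hi (hpos i)⟩))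
      · obtain ⟨i, hi⟩ := h
        exact Or.inr (Or.inr (Set.mem_iUnion.mpr ⟨i, le_antisymm (hle i) hi⟩))
    refine measure_mono_null hsub ?_
    refine measure_union_null ?_ (measure_union_null ?_ ?_)
    · refine measure_iUnion_null fun p => ?_
      by_cases h : p.1 = p.2
      · refine measure_mono_null (fun s hs => (hs.1 h).elim) (measure_empty (μ := volume))
      · exact measure_mono_null (fun s hs => hs.2) (volume_diag_eq_zero h)
    · exact measure_iUnion_null fun i => volume_eval_eq_zero i 0
    · exact measure_iUnion_null fun i => volume_eval_eq_zero i 1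
  · -- T ⊆ S so T \ S = ∅
    have : T n \ S n = ∅ := by
      rw [Set.diff_eq_empty]
      rintro s ⟨hmono, hpos, hlt⟩
      refine ⟨fun i j hij => ?_, fun i => le_of_lt (hpos i), fun i => le_of_lt (hlt i)⟩
      rcases eq_or_lt_of_le hij with rfl | h
      · exact le_refl _
      · exact le_of_lt (hmono i j h)
    rw [this]
    simp

end SimplexSqrtAux

open SimplexSqrtAux in
/-- Integral over the ordered simplex `{0 ≤ s₁ ≤ ⋯ ≤ sₙ ≤ 1}` of the product of inverse
square roots of the consecutive gaps equals `π^{n/2} / Γ(n/2 + 1)`. -/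
theorem integral_simplex_prod_inv_sqrt_gaps (n : ℕ) (hn : 1 ≤ n) :
    (∫ s : Fin n → ℝ in
        {s | (∀ i j : Fin n, i ≤ j → s i ≤ s j) ∧ (∀ i, 0 ≤ s i) ∧ (∀ i, s i ≤ 1)},
      (∏ i : Fin n,
        Real.sqrt (s i -
          if (i : ℕ) = 0 then 0
          else s ⟨(i : ℕ) - 1, lt_of_le_of_lt (Nat.sub_le _ _) i.isLt⟩))⁻¹)
    = Real.pi ^ ((n : ℝ) / 2) / Real.Gamma ((n : ℝ) / 2 + 1) := by
  set g : (Fin n → ℝ) → ℝ := fun s => (∏ i : Fin n, Real.sqrt (s i - prev s i))⁻¹ with hg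
  have hstep1 : (∫ s : Fin n → ℝ in
      {s | (∀ i j : Fin n, i ≤ j → s i ≤ s j) ∧ (∀ i, 0 ≤ s i) ∧ (∀ i, s i ≤ 1)}, g s)
      = ∫ s in T n, g s := setIntegral_congr_set S_ae_eq_T
  have hstep2 : (∫ s in T n, g s) = ∫ x in U n, |(D n x).det| • g (phi n x) := by
    rw [← phi_image]
    exact integral_image_eq_integral_abs_det_fderiv_smul volume measurableSet_U
      (fun x _ => (hasFDerivAt_phi x).hasFDerivWithinAt) injOn_phi g
  have hstep3 : (∫ x in U n, |(D n x).det| • g (phi n x)) = ∫ _x in U n, (2 : ℝ) ^ n := by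
    apply setIntegral_congr_fun measurableSet_U
    intro x hx
    obtain ⟨hpos, -⟩ := hx
    have hdet : |(D n x).det| = ∏ i, (2 * x i) := by
      rw [det_D, abs_of_pos]
      exact Finset.prod_pos fun i _ => by linarith [hpos i]
    have hgval : g (phi n x) = (∏ i, x i)⁻¹ := by
      show (∏ i : Fin n, Real.sqrt (phi n x i - prev (phi n x) i))⁻¹ = (∏ i, x i)⁻¹
      congr 1
      apply Finset.prod_congr rfl
      intro i _
      have h1 : phi n x i - prev (phi n x) i = x i ^ 2 := phi_gap x i
      rw [h1, Real.sqrt_sq (le_of_lt (hpos i))]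
    show |(D n x).det| • g (phi n x) = (2 : ℝ) ^ n
    rw [hdet, hgval, smul_eq_mul, Finset.prod_mul_distrib, Finset.prod_const,
      Finset.card_univ, Fintype.card_fin]
    have hne : (∏ i, x i) ≠ 0 := ne_of_gt (Finset.prod_pos fun i _ => hpos i)
    rw [mul_assoc, mul_inv_cancel₀ hne, mul_one]
  have hvol : (volume (U n)).toReal * 2 ^ n
      = Real.sqrt Real.pi ^ n / Real.Gamma ((n : ℝ) / 2 + 1) := by
    have hB := volume_B_value (n := n)
    rw [volume_B_eq] at hB
    have := congrArg ENNReal.toReal hB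
    rw [ENNReal.toReal_mul, ENNReal.toReal_ofReal] at this
    · rw [ENNReal.toReal_pow] at this
      simpa [mul_comm] using this
    · have hΓpos : 0 < Real.Gamma ((n : ℝ) / 2 + 1) :=
        Real.Gamma_pos_of_pos (by positivity)
      exact div_nonneg (pow_nonneg (Real.sqrt_nonneg _) _) hΓpos.le
  have hsqrt : Real.sqrt Real.pi ^ n = Real.pi ^ ((n : ℝ) / 2) := by
    rw [Real.sqrt_eq_rpow, ← Real.rpow_natCast (Real.pi ^ ((1 : ℝ) / 2)) n,
      ← Real.rpow_mul Real.pi_pos.le]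
    congr 1
    ring
  calc (∫ s : Fin n → ℝ in
      {s | (∀ i j : Fin n, i ≤ j → s i ≤ s j) ∧ (∀ i, 0 ≤ s i) ∧ (∀ i, s i ≤ 1)},
      (∏ i : Fin n,
        Real.sqrt (s i -
          if (i : ℕ) = 0 then 0
          else s ⟨(i : ℕ) - 1, lt_of_le_of_lt (Nat.sub_le _ _) i.isLt⟩))⁻¹)
      = ∫ s in T n, g s := hstep1
    _ = ∫ x in U n, |(D n x).det| • g (phi n x) := hstep2
    _ = ∫ _x in U n, (2 : ℝ) ^ n := hstep3
    _ = (volume (U n)).toReal • (2 : ℝ) ^ n := setIntegral_const _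
    _ = Real.pi ^ ((n : ℝ) / 2) / Real.Gamma ((n : ℝ) / 2 + 1) := by
        rw [smul_eq_mul, hvol, hsqrt]
end

section
/- Let B be a standard real Brownian motion started at 0 and S_t = sup_{s ≤ t} B_s. Then for every t > 0, a ≥ 0 and b ≤ a, P(S_t ≥ a, B_t ≤ b) = P(B_t ≥ 2a − b) (the reflection principle). -/
open MeasureTheory ProbabilityTheory Filter Set

namespace RPaux

variable {n : ℕ}

/-- partial sum of the first `k` coordinates -/
def psum (k : ℕ) (x : Fin n → ℝ) : ℝ := ∑ i : Fin n, if (i : ℕ) < k then x i else 0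

/-- total sum -/
def ssum (x : Fin n → ℝ) : ℝ := ∑ i : Fin n, x i

/-- flip the coordinates from index `k` on -/
def flip (k : ℕ) (x : Fin n → ℝ) : Fin n → ℝ := fun i => if k ≤ (i : ℕ) then -x i else x i

lemma measurable_psum (k : ℕ) : Measurable (psum (n := n) k) := by
  refine Finset.measurable_sum _ (fun i _ => ?_)
  by_cases h : (i : ℕ) < k
  · simp only [if_pos h]; exact measurable_pi_apply i
  · simp only [if_neg h]; exact measurable_const

lemma measurable_ssum : Measurable (ssum (n := n)) :=
  Finset.measurable_sum _ (fun i _ => measurable_pi_apply i)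

lemma measurable_flip (k : ℕ) : Measurable (flip (n := n) k) := by
  refine measurable_pi_lambda _ (fun i => ?_)
  by_cases h : k ≤ (i : ℕ)
  · simp only [flip, if_pos h]; exact (measurable_pi_apply i).neg
  · simp only [flip, if_neg h]; exact measurable_pi_apply i

lemma psum_zero (x : Fin n → ℝ) : psum 0 x = 0 := by simp [psum]

lemma psum_flip {j k : ℕ} (h : j ≤ k) (x : Fin n → ℝ) : psum j (flip k x) = psum j x := by
  refine Finset.sum_congr rfl (fun i _ => ?_)
  by_cases hi : (i : ℕ) < j
  · rw [if_pos hi, if_pos hi, flip, if_neg (by omega)]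
  · rw [if_neg hi, if_neg hi]

lemma ssum_flip (k : ℕ) (x : Fin n → ℝ) : ssum (flip k x) = 2 * psum k x - ssum x := by
  have : ∀ i : Fin n, flip k x i = 2 * (if (i : ℕ) < k then x i else 0) - x i := by
    intro i
    by_cases h : k ≤ (i : ℕ)
    · rw [flip, if_pos h, if_neg (by omega)]; ring
    · rw [flip, if_neg h, if_pos (by omega)]; ring
  simp only [ssum, this, psum]
  rw [Finset.sum_sub_distrib, ← Finset.mul_sum]

lemma psum_succ (k : ℕ) (hk : k < n) (x : Fin n → ℝ) :
    psum (k + 1) x = psum k x + x ⟨k, hk⟩ := by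
  have : psum (k+1) x - psum k x = x ⟨k, hk⟩ := by
    rw [psum, psum, ← Finset.sum_sub_distrib]
    rw [Finset.sum_eq_single ⟨k, hk⟩]
    · simp
    · intro i _ hne
      have : (i : ℕ) ≠ k := fun h => hne (by ext; exact h)
      by_cases hi : (i : ℕ) < k
      · rw [if_pos (by omega), if_pos hi]; ring
      · rw [if_neg (by omega), if_neg hi]; ring
    · intro h; exact absurd (Finset.mem_univ _) h
  linarith

/-- the event: first crossing of level `c` by the partial sums happens at index `k` -/
def Aev (c : ℝ) (k : ℕ) : Set (Fin n → ℝ) :=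
  {x | (∀ j < k, psum j x ≤ c) ∧ c < psum k x}

/-- the event: some partial sum (with index `≤ n`) exceeds `c` -/
def Mev (c : ℝ) : Set (Fin n → ℝ) := {x | ∃ k ≤ n, c < psum k x}

lemma measurableSet_Aev (c : ℝ) (k : ℕ) : MeasurableSet (Aev (n := n) c k) := by
  have h1 : MeasurableSet {x : Fin n → ℝ | ∀ j < k, psum j x ≤ c} := by
    have : {x : Fin n → ℝ | ∀ j < k, psum j x ≤ c}
        = ⋂ j ∈ Finset.range k, {x | psum j x ≤ c} := by
      ext x; simp [Finset.mem_range]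
    rw [this]
    exact MeasurableSet.biInter (Finset.range k).countable_toSet
      (fun j _ => measurableSet_le (measurable_psum j) measurable_const)
  exact h1.inter (measurableSet_lt measurable_const (measurable_psum k))

lemma measurableSet_Mev (c : ℝ) : MeasurableSet (Mev (n := n) c) := by
  have : Mev (n := n) c = ⋃ k ∈ Finset.range (n+1), {x | c < psum k x} := by
    ext x; simp [Mev, Nat.lt_succ_iff]
  rw [this]
  exact MeasurableSet.biUnion (Finset.range (n+1)).countable_toSet
    (fun k _ => measurableSet_lt measurable_const (measurable_psum k))

lemma Mev_eq_biUnion (c : ℝ) :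
    Mev (n := n) c = ⋃ k ∈ Finset.range (n+1), Aev c k := by
  ext x
  simp only [Mev, mem_setOf_eq, mem_iUnion, Finset.mem_range, Nat.lt_succ_iff, exists_prop]
  constructor
  · rintro ⟨k, hk, hck⟩
    have hex : ∃ j, c < psum j x := ⟨k, hck⟩
    refine ⟨Nat.find hex, le_trans (Nat.find_le hck) hk, ?_, Nat.find_spec hex⟩
    intro j hj
    exact le_of_not_gt (Nat.find_min hex hj)
  · rintro ⟨k, hk, _, hck⟩
    exact ⟨k, hk, hck⟩

lemma Aev_disjoint (c : ℝ) : (Set.univ : Set ℕ).PairwiseDisjoint (Aev (n := n) c) := by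
  intro k _ l _ hkl
  wlog h : k < l generalizing k l
  · exact (this (Set.mem_univ _) (Set.mem_univ _) hkl.symm (by omega)).symm
  refine Set.disjoint_left.2 ?_
  rintro x ⟨_, hk2⟩ ⟨hl1, _⟩
  exact absurd hk2 (not_lt.2 (hl1 k h))

end RPaux

namespace RPaux

variable {n : ℕ}

lemma psum_of_le {k : ℕ} (hk : n ≤ k) (x : Fin n → ℝ) : psum k x = ssum x := by
  refine Finset.sum_congr rfl (fun i _ => if_pos (lt_of_lt_of_le i.isLt hk))

variable (ν : Fin n → Measure ℝ) [∀ i, IsProbabilityMeasure (ν i)]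

lemma flip_measurePreserving (hsym : ∀ i, (ν i).map (fun x => -x) = ν i) (k : ℕ) :
    MeasurePreserving (flip (n := n) k) (Measure.pi ν) (Measure.pi ν) := by
  refine ⟨measurable_flip k, ?_⟩
  refine (Measure.pi_eq fun s hs => ?_).symm
  rw [Measure.map_apply (measurable_flip k) (MeasurableSet.univ_pi hs)]
  have hpre : flip (n := n) k ⁻¹' Set.pi Set.univ s
      = Set.pi Set.univ (fun i : Fin n => if k ≤ (i : ℕ) then (fun y : ℝ => -y) ⁻¹' s i else s i) := by
    ext x
    simp only [mem_preimage, Set.mem_pi, mem_univ, forall_true_left, true_implies]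
    refine forall_congr' (fun i => ?_)
    by_cases h : k ≤ (i : ℕ) <;> simp [flip, h]
  rw [hpre, Measure.pi_pi]
  refine Finset.prod_congr rfl (fun i _ => ?_)
  by_cases h : k ≤ (i : ℕ)
  · rw [if_pos h, ← Measure.map_apply measurable_neg (hs i), hsym i]
  · rw [if_neg h]

lemma flip_mem_Aev_iff {c : ℝ} {k : ℕ} {x : Fin n → ℝ} :
    flip k x ∈ Aev c k ↔ x ∈ Aev c k := by
  unfold Aev
  simp only [mem_setOf_eq]
  constructor
  · rintro ⟨h1, h2⟩
    rw [psum_flip (le_refl k)] at h2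
    exact ⟨fun j hj => by have := h1 j hj; rwa [psum_flip (le_of_lt hj)] at this, h2⟩
  · rintro ⟨h1, h2⟩
    rw [psum_flip (le_refl k)]
    exact ⟨fun j hj => by rw [psum_flip (le_of_lt hj)]; exact h1 j hj, h2⟩

lemma measure_biUnion_A (c : ℝ) (T : Set (Fin n → ℝ)) (hT : MeasurableSet T) :
    Measure.pi ν (Mev c ∩ T) = ∑ k ∈ Finset.range (n+1), Measure.pi ν (Aev c k ∩ T) := by
  rw [Mev_eq_biUnion, Set.iUnion₂_inter]
  rw [measure_biUnion_finset ?_ (fun k _ => (measurableSet_Aev c k).inter hT)]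
  intro k _ l _ hkl
  exact Disjoint.mono inter_subset_left inter_subset_left
    (Aev_disjoint c (Set.mem_univ k) (Set.mem_univ l) hkl)

lemma upper_bound (hsym : ∀ i, (ν i).map (fun x => -x) = ν i) (c b : ℝ) :
    Measure.pi ν (Mev c ∩ {x | ssum x ≤ b}) ≤ Measure.pi ν {x | 2 * c - b ≤ ssum x} := by
  set μ := Measure.pi ν with hμ
  have hTb : MeasurableSet {x : Fin n → ℝ | ssum x ≤ b} :=
    measurableSet_le measurable_ssum measurable_const
  have hTr : MeasurableSet {x : Fin n → ℝ | 2 * c - b ≤ ssum x} :=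
    measurableSet_le measurable_const measurable_ssum
  have key : ∀ k, μ (Aev c k ∩ {x | ssum x ≤ b}) ≤ μ (Aev c k ∩ {x | 2 * c - b ≤ ssum x}) := by
    intro k
    have hmp := flip_measurePreserving ν hsym k
    have hms : MeasurableSet (Aev (n := n) c k ∩ {x | ssum x ≤ b}) :=
      (measurableSet_Aev c k).inter hTb
    have hpre : flip k ⁻¹' (Aev (n := n) c k ∩ {x | ssum x ≤ b})
        = Aev c k ∩ {x | 2 * psum k x - ssum x ≤ b} := by
      ext x
      simp only [mem_preimage, mem_inter_iff, mem_setOf_eq, flip_mem_Aev_iff, ssum_flip]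
    calc μ (Aev c k ∩ {x | ssum x ≤ b})
        = μ (flip k ⁻¹' (Aev c k ∩ {x | ssum x ≤ b})) := (hmp.measure_preimage hms.nullMeasurableSet).symm
      _ = μ (Aev c k ∩ {x | 2 * psum k x - ssum x ≤ b}) := by rw [hpre]
      _ ≤ μ (Aev c k ∩ {x | 2 * c - b ≤ ssum x}) := by
          refine measure_mono (fun x hx => ?_)
          obtain ⟨hA, hx2⟩ := hx
          refine ⟨hA, ?_⟩
          have := hA.2
          simp only [mem_setOf_eq] at hx2 ⊢
          linarith
  calc μ (Mev c ∩ {x | ssum x ≤ b})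
      = ∑ k ∈ Finset.range (n+1), μ (Aev c k ∩ {x | ssum x ≤ b}) := measure_biUnion_A ν c _ hTb
    _ ≤ ∑ k ∈ Finset.range (n+1), μ (Aev c k ∩ {x | 2 * c - b ≤ ssum x}) :=
        Finset.sum_le_sum (fun k _ => key k)
    _ = μ (Mev c ∩ {x | 2 * c - b ≤ ssum x}) := (measure_biUnion_A ν c _ hTr).symm
    _ ≤ μ {x | 2 * c - b ≤ ssum x} := measure_mono inter_subset_right

lemma lower_bound (hsym : ∀ i, (ν i).map (fun x => -x) = ν i) (c b δ : ℝ)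
    (hc : 0 ≤ c) (hδ : 0 < δ) (hb : b ≤ c) :
    Measure.pi ν {x | 2 * (c + δ) - b ≤ ssum x}
      ≤ Measure.pi ν (Mev c ∩ {x | ssum x ≤ b}) + Measure.pi ν {x | ∃ i, δ < x i} := by
  set μ := Measure.pi ν with hμ
  have hTr : MeasurableSet {x : Fin n → ℝ | 2 * (c + δ) - b ≤ ssum x} :=
    measurableSet_le measurable_const measurable_ssum
  have hTb : MeasurableSet {x : Fin n → ℝ | ssum x ≤ b} :=
    measurableSet_le measurable_ssum measurable_const
  have hsub : {x : Fin n → ℝ | 2 * (c + δ) - b ≤ ssum x} ⊆ Mev c := by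
    intro x hx
    simp only [mem_setOf_eq] at hx
    exact ⟨n, le_refl n, by rw [psum_of_le (le_refl n)]; linarith⟩
  have hdecomp : {x : Fin n → ℝ | 2 * (c + δ) - b ≤ ssum x}
      = Mev c ∩ {x | 2 * (c + δ) - b ≤ ssum x} := by
    rw [Set.inter_eq_right.2 hsub]
  have key : ∀ k, μ (Aev c k ∩ {x | 2 * (c + δ) - b ≤ ssum x})
      ≤ μ (Aev c k ∩ {x | ssum x ≤ b}) + μ (Aev c k ∩ {x | ∃ i, δ < x i}) := by
    intro k
    -- split on overshoot
    have hsplit : Aev (n := n) c k ∩ {x | 2 * (c + δ) - b ≤ ssum x}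
        ⊆ (Aev c k ∩ {x | psum k x ≤ c + δ} ∩ {x | 2 * (c + δ) - b ≤ ssum x})
          ∪ (Aev c k ∩ {x | ∃ i, δ < x i}) := by
      rintro x ⟨hA, hR⟩
      by_cases h : psum k x ≤ c + δ
      · exact Or.inl ⟨⟨hA, h⟩, hR⟩
      · -- overshoot: k ≥ 1 and the k-th increment is > δ
        refine Or.inr ⟨hA, ?_⟩
        push_neg at h
        rcases Nat.eq_zero_or_pos k with hk0 | hkpos
        · exfalso
          have := hA.2
          rw [hk0, psum_zero] at this
          linarith
        · obtain ⟨j, rfl⟩ : ∃ j, k = j + 1 := ⟨k - 1, by omega⟩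
          by_cases hjn : j < n
          · have hsucc := psum_succ j hjn x
            have hj : psum j x ≤ c := hA.1 j (Nat.lt_succ_self j)
            exact ⟨⟨j, hjn⟩, by linarith⟩
          · exfalso
            push_neg at hjn
            have h1 : psum (j+1) x = ssum x := psum_of_le (by omega) x
            have h2 : psum j x = ssum x := psum_of_le hjn x
            have hj : psum j x ≤ c := hA.1 j (Nat.lt_succ_self j)
            rw [h1] at h
            rw [h2] at hj
            linarith
    have hmp := flip_measurePreserving ν hsym k
    have hG : MeasurableSet (Aev (n := n) c k ∩ {x | psum k x ≤ c + δ}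
        ∩ {x | 2 * (c + δ) - b ≤ ssum x}) :=
      ((measurableSet_Aev c k).inter
        (measurableSet_le (measurable_psum k) measurable_const)).inter hTr
    have hGle : μ (Aev c k ∩ {x | psum k x ≤ c + δ} ∩ {x | 2 * (c + δ) - b ≤ ssum x})
        ≤ μ (Aev c k ∩ {x | ssum x ≤ b}) := by
      have hpre : flip k ⁻¹' (Aev (n := n) c k ∩ {x | psum k x ≤ c + δ}
          ∩ {x | 2 * (c + δ) - b ≤ ssum x})
          = Aev c k ∩ {x | psum k x ≤ c + δ} ∩ {x | 2 * (c + δ) - b ≤ 2 * psum k x - ssum x} := by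
        ext x
        simp only [mem_preimage, mem_inter_iff, mem_setOf_eq, flip_mem_Aev_iff, ssum_flip,
          psum_flip (le_refl k)]
      calc μ (Aev c k ∩ {x | psum k x ≤ c + δ} ∩ {x | 2 * (c + δ) - b ≤ ssum x})
          = μ (flip k ⁻¹' (Aev c k ∩ {x | psum k x ≤ c + δ}
              ∩ {x | 2 * (c + δ) - b ≤ ssum x})) := (hmp.measure_preimage hG.nullMeasurableSet).symm
        _ = μ (Aev c k ∩ {x | psum k x ≤ c + δ}
              ∩ {x | 2 * (c + δ) - b ≤ 2 * psum k x - ssum x}) := by rw [hpre]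
        _ ≤ μ (Aev c k ∩ {x | ssum x ≤ b}) := by
            refine measure_mono (fun x hx => ?_)
            obtain ⟨⟨hA, h1⟩, h2⟩ := hx
            simp only [mem_setOf_eq] at h1 h2
            exact ⟨hA, by simp only [mem_setOf_eq]; linarith⟩
    calc μ (Aev c k ∩ {x | 2 * (c + δ) - b ≤ ssum x})
        ≤ μ ((Aev c k ∩ {x | psum k x ≤ c + δ} ∩ {x | 2 * (c + δ) - b ≤ ssum x})
            ∪ (Aev c k ∩ {x | ∃ i, δ < x i})) := measure_mono hsplit
      _ ≤ μ (Aev c k ∩ {x | psum k x ≤ c + δ} ∩ {x | 2 * (c + δ) - b ≤ ssum x})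
            + μ (Aev c k ∩ {x | ∃ i, δ < x i}) := measure_union_le _ _
      _ ≤ μ (Aev c k ∩ {x | ssum x ≤ b}) + μ (Aev c k ∩ {x | ∃ i, δ < x i}) := by
            exact add_le_add_left hGle _
  have hOv : MeasurableSet {x : Fin n → ℝ | ∃ i, δ < x i} := by
    have : {x : Fin n → ℝ | ∃ i, δ < x i} = ⋃ i, {x | δ < x i} := by ext x; simp
    rw [this]
    exact MeasurableSet.iUnion (fun i => measurableSet_lt measurable_const (measurable_pi_apply i))
  calc μ {x | 2 * (c + δ) - b ≤ ssum x}
      = μ (Mev c ∩ {x | 2 * (c + δ) - b ≤ ssum x}) := by rw [← hdecomp]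
    _ = ∑ k ∈ Finset.range (n+1), μ (Aev c k ∩ {x | 2 * (c + δ) - b ≤ ssum x}) :=
        measure_biUnion_A ν c _ hTr
    _ ≤ ∑ k ∈ Finset.range (n+1),
          (μ (Aev c k ∩ {x | ssum x ≤ b}) + μ (Aev c k ∩ {x | ∃ i, δ < x i})) :=
        Finset.sum_le_sum (fun k _ => key k)
    _ = ∑ k ∈ Finset.range (n+1), μ (Aev c k ∩ {x | ssum x ≤ b})
          + ∑ k ∈ Finset.range (n+1), μ (Aev c k ∩ {x | ∃ i, δ < x i}) :=
        Finset.sum_add_distrib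
    _ = μ (Mev c ∩ {x | ssum x ≤ b}) + μ (Mev c ∩ {x | ∃ i, δ < x i}) := by
        rw [measure_biUnion_A ν c _ hTb, measure_biUnion_A ν c _ hOv]
    _ ≤ μ (Mev c ∩ {x | ssum x ≤ b}) + μ {x | ∃ i, δ < x i} :=
        add_le_add_right (measure_mono inter_subset_right) _

end RPaux

namespace RPaux

open scoped NNReal

lemma map_fun_eq_pi {Ω : Type*} [MeasureSpace Ω] [IsProbabilityMeasure (ℙ : Measure Ω)]
    {n : ℕ} (X : Fin n → Ω → ℝ) (hX : ∀ i, Measurable (X i))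
    (hind : iIndepFun X ℙ) :
    Measure.map (fun ω i => X i ω) ℙ = Measure.pi (fun i => Measure.map (X i) ℙ) := by
  haveI : ∀ i, IsProbabilityMeasure (Measure.map (X i) ℙ) :=
    fun i => Measure.isProbabilityMeasure_map (hX i).aemeasurable
  refine (Measure.pi_eq fun s hs => ?_).symm
  rw [Measure.map_apply (measurable_pi_lambda _ hX) (MeasurableSet.univ_pi hs)]
  have hpre : (fun ω i => X i ω) ⁻¹' Set.pi Set.univ s = ⋂ i ∈ Finset.univ, X i ⁻¹' s i := by
    ext ω; simp [Set.mem_pi]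
  rw [hpre, hind.measure_inter_preimage_eq_mul Finset.univ (fun i _ => hs i)]
  exact Finset.prod_congr rfl fun i _ => (Measure.map_apply (hX i) (hs i)).symm

lemma gauss_symm (v : ℝ≥0) : (gaussianReal 0 v).map (fun x : ℝ => -x) = gaussianReal 0 v := by
  have h := gaussianReal_map_const_mul (μ := 0) (v := v) (-1)
  have h2 : (NNReal.mk ((-1:ℝ)^2) (sq_nonneg _)) = 1 := by ext; norm_num
  rw [h2, one_mul, mul_zero] at h
  have h3 : (fun x : ℝ => -1 * x) = (fun x : ℝ => -x) := by funext x; ring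
  rwa [h3] at h

lemma gauss_singleton {v : ℝ≥0} (hv : v ≠ 0) (m x : ℝ) : gaussianReal m v {x} = 0 := by
  rw [gaussianReal_of_var_ne_zero m hv, withDensity_apply _ (measurableSet_singleton x)]
  simp [Measure.restrict_singleton]

end RPaux

namespace RPaux

variable {Ω : Type*} [MeasureSpace Ω]

/-- increments of `B` along the uniform grid with `n` steps on `[0,t]` -/
noncomputable def Xinc (B : ℝ → Ω → ℝ) (t : ℝ) (n : ℕ) (i : Fin n) : Ω → ℝ :=
  fun ω => B (((i : ℕ) + 1) * t / n) ω - B ((i : ℕ) * t / n) ω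

noncomputable def Phi (B : ℝ → Ω → ℝ) (t : ℝ) (n : ℕ) : Ω → (Fin n → ℝ) := fun ω i => Xinc B t n i ω

section Grid

variable [IsProbabilityMeasure (ℙ : Measure Ω)] (B : ℝ → Ω → ℝ) (t : ℝ) (n : ℕ)

lemma measurable_Phi (hMeas : ∀ s, Measurable (B s)) : Measurable (Phi B t n) :=
  measurable_pi_lambda _ (fun i => (hMeas _).sub (hMeas _))

lemma grid_law (hMeas : ∀ s, Measurable (B s)) (ht : 0 < t) (hn : 0 < n)
    (hGauss : ∀ s u : ℝ, 0 ≤ s → s ≤ u →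
      Measure.map (fun ω => B u ω - B s ω) ℙ = gaussianReal 0 (Real.toNNReal (u - s)))
    (hInd : ∀ m : ℕ, ∀ ts : Fin (m + 1) → ℝ, Monotone ts → (∀ i, 0 ≤ ts i) →
      iIndepFun
        (fun i : Fin m => fun ω => B (ts i.succ) ω - B (ts i.castSucc) ω) ℙ) :
    Measure.map (Phi B t n) ℙ
      = Measure.pi (fun _ : Fin n => gaussianReal 0 (Real.toNNReal (t / n))) := by
  have hn' : (0:ℝ) < (n:ℝ) := by exact_mod_cast hn
  set ts : Fin (n+1) → ℝ := fun i => ((i:ℕ):ℝ) * t / n with hts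
  have hts_mono : Monotone ts := by
    intro i j hij
    have hcast : ((i:ℕ):ℝ) ≤ ((j:ℕ):ℝ) := by exact_mod_cast hij
    simp only [hts]
    gcongr
  have hts_nonneg : ∀ i, 0 ≤ ts i := fun i => by positivity
  have hind := hInd n ts hts_mono hts_nonneg
  have hXX : (fun i : Fin n => fun ω => B (ts i.succ) ω - B (ts i.castSucc) ω)
      = Xinc B t n := by
    funext i ω
    have h1 : ((i.succ : ℕ):ℝ) = ((i:ℕ):ℝ) + 1 := by simp
    have h2 : ((i.castSucc : ℕ):ℝ) = ((i:ℕ):ℝ) := by simp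
    simp only [hts, Xinc, h1, h2]
  rw [hXX] at hind
  have hXmeas : ∀ i : Fin n, Measurable (Xinc B t n i) := fun i => (hMeas _).sub (hMeas _)
  have hmarg : ∀ i : Fin n, Measure.map (Xinc B t n i) ℙ
      = gaussianReal 0 (Real.toNNReal (t / n)) := by
    intro i
    have h1 : (0:ℝ) ≤ ((i:ℕ):ℝ) * t / n := by positivity
    have h2 : ((i:ℕ):ℝ) * t / n ≤ (((i:ℕ):ℝ) + 1) * t / n := by
      gcongr
      · linarith
    have := hGauss (((i:ℕ):ℝ) * t / n) ((((i:ℕ):ℝ) + 1) * t / n) h1 h2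
    have harith : (((i:ℕ):ℝ) + 1) * t / n - ((i:ℕ):ℝ) * t / n = t / n := by ring
    rw [harith] at this
    exact this
  have := map_fun_eq_pi (Xinc B t n) hXmeas hind
  rw [show (fun i => Measure.map (Xinc B t n i) ℙ)
      = (fun _ : Fin n => gaussianReal 0 (Real.toNNReal (t / n))) from funext hmarg] at this
  exact this

lemma grid_psum (h0 : (0:ℝ) * t / n = 0) :
    ∀ k : ℕ, k ≤ n → ∀ ω, psum k (Phi B t n ω) = B ((k:ℝ) * t / n) ω - B 0 ω := by
  intro k
  induction k with
  | zero =>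
      intro _ ω
      rw [psum_zero]
      norm_num
  | succ k ih =>
      intro hk ω
      have hk' : k < n := hk
      rw [psum_succ k hk', ih (le_of_lt hk') ω]
      have : Phi B t n ω ⟨k, hk'⟩ = B (((k:ℝ) + 1) * t / n) ω - B ((k:ℝ) * t / n) ω := by
        simp only [Phi, Xinc]
      rw [this]
      push_cast
      ring
  
lemma grid_ssum (ht : 0 < t) (hn : 0 < n) :
    ∀ ω, ssum (Phi B t n ω) = B t ω - B 0 ω := by
  intro ω
  have hn' : (0:ℝ) < (n:ℝ) := by exact_mod_cast hn
  have h0 : (0:ℝ) * t / n = 0 := by ring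
  rw [← psum_of_le (le_refl n), grid_psum B t n h0 n (le_refl n) ω]
  have : (n:ℝ) * t / n = t := by field_simp
  rw [this]

end Grid

end RPaux

namespace RPaux

section Grid2

variable {Ω : Type*} [MeasureSpace Ω] [IsProbabilityMeasure (ℙ : Measure Ω)]
variable (B : ℝ → Ω → ℝ) (t : ℝ) (n : ℕ)

lemma grid_event_eq (c b : ℝ) (ht : 0 < t) (hn : 0 < n) :
    Phi B t n ⁻¹' (Mev c ∩ {x | ssum x ≤ b})
      = {ω | (∃ k ≤ n, c < B ((k:ℝ) * t / n) ω - B 0 ω) ∧ B t ω - B 0 ω ≤ b} := by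
  have h0 : (0:ℝ) * t / n = 0 := by ring
  ext ω
  simp only [mem_preimage, mem_inter_iff, Mev, mem_setOf_eq, grid_ssum B t n ht hn ω]
  constructor
  · rintro ⟨⟨k, hk, hck⟩, h2⟩
    exact ⟨⟨k, hk, by rwa [grid_psum B t n h0 k hk ω] at hck⟩, h2⟩
  · rintro ⟨⟨k, hk, hck⟩, h2⟩
    exact ⟨⟨k, hk, by rwa [grid_psum B t n h0 k hk ω]⟩, h2⟩

lemma grid_rhs_eq (c' : ℝ) (ht : 0 < t) (hn : 0 < n) :
    Phi B t n ⁻¹' {x | c' ≤ ssum x} = {ω | c' ≤ B t ω - B 0 ω} := by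
  ext ω
  simp only [mem_preimage, mem_setOf_eq, grid_ssum B t n ht hn ω]

lemma grid_ov_eq (δ : ℝ) :
    Phi B t n ⁻¹' {x | ∃ i, δ < x i}
      = {ω | ∃ i : Fin n, δ < B (((i:ℕ):ℝ) * t / n + t / n) ω - B (((i:ℕ):ℝ) * t / n) ω} := by
  ext ω
  simp only [mem_preimage, mem_setOf_eq, Phi, Xinc]
  refine exists_congr (fun i => ?_)
  have : (((i:ℕ):ℝ) + 1) * t / n = ((i:ℕ):ℝ) * t / n + t / n := by ring
  rw [this]

/-- transfer a discrete-event probability through the grid law -/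
lemma grid_apply (hMeas : ∀ s, Measurable (B s)) (ht : 0 < t) (hn : 0 < n)
    (hGauss : ∀ s u : ℝ, 0 ≤ s → s ≤ u →
      Measure.map (fun ω => B u ω - B s ω) ℙ = gaussianReal 0 (Real.toNNReal (u - s)))
    (hInd : ∀ m : ℕ, ∀ ts : Fin (m + 1) → ℝ, Monotone ts → (∀ i, 0 ≤ ts i) →
      iIndepFun
        (fun i : Fin m => fun ω => B (ts i.succ) ω - B (ts i.castSucc) ω) ℙ)
    (E : Set (Fin n → ℝ)) (hE : MeasurableSet E) :
    ℙ (Phi B t n ⁻¹' E)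
      = Measure.pi (fun _ : Fin n => gaussianReal 0 (Real.toNNReal (t / n))) E := by
  rw [← Measure.map_apply (measurable_Phi B t n hMeas) hE,
    grid_law B t n hMeas ht hn hGauss hInd]

lemma grid_upper (hMeas : ∀ s, Measurable (B s)) (ht : 0 < t) (hn : 0 < n)
    (hGauss : ∀ s u : ℝ, 0 ≤ s → s ≤ u →
      Measure.map (fun ω => B u ω - B s ω) ℙ = gaussianReal 0 (Real.toNNReal (u - s)))
    (hInd : ∀ m : ℕ, ∀ ts : Fin (m + 1) → ℝ, Monotone ts → (∀ i, 0 ≤ ts i) →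
      iIndepFun
        (fun i : Fin m => fun ω => B (ts i.succ) ω - B (ts i.castSucc) ω) ℙ)
    (c b : ℝ) :
    ℙ {ω | (∃ k ≤ n, c < B ((k:ℝ) * t / n) ω - B 0 ω) ∧ B t ω - B 0 ω ≤ b}
      ≤ ℙ {ω | 2 * c - b ≤ B t ω - B 0 ω} := by
  set ν : Fin n → Measure ℝ := fun _ => gaussianReal 0 (Real.toNNReal (t / n)) with hν
  have hsym : ∀ i, (ν i).map (fun x => -x) = ν i := fun i => gauss_symm _
  have hTb : MeasurableSet {x : Fin n → ℝ | ssum x ≤ b} :=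
    measurableSet_le measurable_ssum measurable_const
  calc ℙ {ω | (∃ k ≤ n, c < B ((k:ℝ) * t / n) ω - B 0 ω) ∧ B t ω - B 0 ω ≤ b}
      = Measure.pi ν (Mev c ∩ {x | ssum x ≤ b}) := by
        rw [← grid_event_eq B t n c b ht hn,
          grid_apply B t n hMeas ht hn hGauss hInd _ ((measurableSet_Mev c).inter hTb)]
    _ ≤ Measure.pi ν {x | 2 * c - b ≤ ssum x} := upper_bound ν hsym c b
    _ = ℙ {ω | 2 * c - b ≤ B t ω - B 0 ω} := by
        rw [← grid_rhs_eq B t n (2 * c - b) ht hn,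
          grid_apply B t n hMeas ht hn hGauss hInd _
            (measurableSet_le measurable_const measurable_ssum)]

lemma grid_lower (hMeas : ∀ s, Measurable (B s)) (ht : 0 < t) (hn : 0 < n)
    (hGauss : ∀ s u : ℝ, 0 ≤ s → s ≤ u →
      Measure.map (fun ω => B u ω - B s ω) ℙ = gaussianReal 0 (Real.toNNReal (u - s)))
    (hInd : ∀ m : ℕ, ∀ ts : Fin (m + 1) → ℝ, Monotone ts → (∀ i, 0 ≤ ts i) →
      iIndepFun
        (fun i : Fin m => fun ω => B (ts i.succ) ω - B (ts i.castSucc) ω) ℙ)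
    (c b δ : ℝ) (hc : 0 ≤ c) (hb : b ≤ c) (hδ : 0 < δ) :
    ℙ {ω | 2 * (c + δ) - b ≤ B t ω - B 0 ω}
      ≤ ℙ {ω | (∃ k ≤ n, c < B ((k:ℝ) * t / n) ω - B 0 ω) ∧ B t ω - B 0 ω ≤ b}
        + ℙ {ω | ∃ i : Fin n, δ < B (((i:ℕ):ℝ) * t / n + t / n) ω - B (((i:ℕ):ℝ) * t / n) ω} := by
  set ν : Fin n → Measure ℝ := fun _ => gaussianReal 0 (Real.toNNReal (t / n)) with hν
  have hsym : ∀ i, (ν i).map (fun x => -x) = ν i := fun i => gauss_symm _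
  have hTb : MeasurableSet {x : Fin n → ℝ | ssum x ≤ b} :=
    measurableSet_le measurable_ssum measurable_const
  have hOv : MeasurableSet {x : Fin n → ℝ | ∃ i, δ < x i} := by
    have : {x : Fin n → ℝ | ∃ i, δ < x i} = ⋃ i, {x | δ < x i} := by ext x; simp
    rw [this]
    exact MeasurableSet.iUnion (fun i => measurableSet_lt measurable_const (measurable_pi_apply i))
  calc ℙ {ω | 2 * (c + δ) - b ≤ B t ω - B 0 ω}
      = Measure.pi ν {x | 2 * (c + δ) - b ≤ ssum x} := by
        rw [← grid_rhs_eq B t n (2 * (c + δ) - b) ht hn,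
          grid_apply B t n hMeas ht hn hGauss hInd _
            (measurableSet_le measurable_const measurable_ssum)]
    _ ≤ Measure.pi ν (Mev c ∩ {x | ssum x ≤ b}) + Measure.pi ν {x | ∃ i, δ < x i} :=
        lower_bound ν hsym c b δ hc hδ hb
    _ = ℙ {ω | (∃ k ≤ n, c < B ((k:ℝ) * t / n) ω - B 0 ω) ∧ B t ω - B 0 ω ≤ b}
        + ℙ {ω | ∃ i : Fin n, δ < B (((i:ℕ):ℝ) * t / n + t / n) ω - B (((i:ℕ):ℝ) * t / n) ω} := by
        rw [← grid_event_eq B t n c b ht hn, ← grid_ov_eq B t n δ,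
          grid_apply B t n hMeas ht hn hGauss hInd _ ((measurableSet_Mev c).inter hTb),
          grid_apply B t n hMeas ht hn hGauss hInd _ hOv]

end Grid2

end RPaux

namespace RPaux

lemma two_pow_small (t ε : ℝ) (hε : 0 < ε) : ∃ m : ℕ, t / ((2^m : ℕ) : ℝ) < ε := by
  obtain ⟨m, hm⟩ := pow_unbounded_of_one_lt (t / ε) (one_lt_two (α := ℝ))
  refine ⟨m, ?_⟩
  have h2 : (0:ℝ) < ((2^m : ℕ) : ℝ) := by positivity
  rw [div_lt_iff₀ h2]
  have : ((2^m : ℕ) : ℝ) = (2:ℝ)^m := by push_cast; ring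
  rw [this]
  calc t = (t / ε) * ε := by field_simp
    _ < (2:ℝ)^m * ε := by gcongr
    _ = ε * 2^m := by ring

lemma dyadic_near (t : ℝ) (ht : 0 < t) (s : ℝ) (hs : s ∈ Icc 0 t) (ε : ℝ) (hε : 0 < ε) :
    ∃ (m k : ℕ), k ≤ 2^m ∧ |(k:ℝ) * t / ((2^m : ℕ) : ℝ) - s| < ε := by
  obtain ⟨hs0, hst⟩ := hs
  obtain ⟨m, hm⟩ := two_pow_small t ε hε
  have h2 : (0:ℝ) < ((2^m : ℕ) : ℝ) := by positivity
  set k : ℕ := ⌊s * ((2^m : ℕ) : ℝ) / t⌋₊ with hk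
  have hnn : 0 ≤ s * ((2^m : ℕ) : ℝ) / t := by positivity
  have hfl : (k:ℝ) ≤ s * ((2^m : ℕ) : ℝ) / t := Nat.floor_le hnn
  have hfl2 : s * ((2^m : ℕ) : ℝ) / t < (k:ℝ) + 1 := Nat.lt_floor_add_one _
  refine ⟨m, k, ?_, ?_⟩
  · have : s * ((2^m : ℕ) : ℝ) / t ≤ ((2^m : ℕ) : ℝ) := by
      rw [div_le_iff₀ ht]
      nlinarith
    have hkr : (k:ℝ) ≤ ((2^m : ℕ) : ℝ) := le_trans hfl this
    exact_mod_cast hkr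
  · have h1 : (k:ℝ) * t / ((2^m : ℕ) : ℝ) ≤ s := by
      rw [div_le_iff₀ h2]
      calc (k:ℝ) * t ≤ (s * ((2^m : ℕ) : ℝ) / t) * t := by nlinarith
        _ = s * ((2^m : ℕ) : ℝ) := by field_simp
    have h2' : s < (k:ℝ) * t / ((2^m : ℕ) : ℝ) + t / ((2^m : ℕ) : ℝ) := by
      have : s * ((2^m : ℕ) : ℝ) < ((k:ℝ) + 1) * t := by
        rw [div_lt_iff₀ ht] at hfl2
        linarith
      rw [← add_div, ← add_one_mul]
      rw [lt_div_iff₀ h2]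
      linarith
    rw [abs_sub_lt_iff]
    constructor <;> linarith

variable {Ω : Type*} [MeasureSpace Ω]

/-- oscillation event over rational multiples of `t` at scale `2⁻ᵐ` -/
def Oev (B : ℝ → Ω → ℝ) (t δ : ℝ) (m : ℕ) : Set Ω :=
  ⋃ (p : ℚ × ℚ) (_ : p.1 ∈ Icc (0:ℚ) 1 ∧ p.2 ∈ Icc (0:ℚ) 1 ∧ |p.1 - p.2| ≤ 1 / 2^m),
    {ω | δ ≤ |B ((p.1 : ℝ) * t) ω - B ((p.2 : ℝ) * t) ω|}

lemma measurableSet_Oev (B : ℝ → Ω → ℝ) (hMeas : ∀ s, Measurable (B s)) (t δ : ℝ) (m : ℕ) :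
    MeasurableSet (Oev B t δ m) := by
  refine MeasurableSet.iUnion (fun p => MeasurableSet.iUnion (fun _ => ?_))
  exact measurableSet_le measurable_const (((hMeas _).sub (hMeas _)).abs)

lemma Oev_antitone (B : ℝ → Ω → ℝ) (t δ : ℝ) : Antitone (Oev B t δ) := by
  refine antitone_nat_of_succ_le (fun m => ?_)
  refine iUnion₂_subset (fun p hp => ?_)
  refine subset_iUnion₂_of_subset p ⟨hp.1, hp.2.1, le_trans hp.2.2 ?_⟩ subset_rfl
  gcongr
  · norm_num
  · omega

lemma Oev_incl (B : ℝ → Ω → ℝ) (t δ : ℝ) (ht : 0 < t) (m : ℕ) :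
    {ω | ∃ i : Fin (2^m), δ < B (((i:ℕ):ℝ) * t / ((2^m:ℕ):ℝ) + t / ((2^m:ℕ):ℝ)) ω
        - B (((i:ℕ):ℝ) * t / ((2^m:ℕ):ℝ)) ω} ⊆ Oev B t δ m := by
  rintro ω ⟨i, hi⟩
  have h2 : (0:ℚ) < 2^m := by positivity
  set q : ℚ := ((i:ℕ) + 1) / 2^m with hq
  set r : ℚ := ((i:ℕ)) / 2^m with hr
  have hiv : ((i:ℕ):ℚ) + 1 ≤ 2^m := by
    have := i.isLt
    push_cast
    exact_mod_cast Nat.succ_le_of_lt this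
  have hq1 : q ∈ Icc (0:ℚ) 1 := ⟨by positivity, by rw [div_le_one h2]; exact_mod_cast hiv⟩
  have hr1 : r ∈ Icc (0:ℚ) 1 := ⟨by positivity, by
    rw [div_le_one h2]
    calc ((i:ℕ):ℚ) ≤ ((i:ℕ):ℚ) + 1 := by linarith
      _ ≤ 2^m := hiv⟩
  have habs : |q - r| ≤ 1 / 2^m := by
    have : q - r = 1 / 2^m := by rw [hq, hr]; field_simp; ring
    rw [this, abs_of_pos (by positivity)]
  refine mem_iUnion₂.2 ⟨(q, r), ⟨hq1, hr1, habs⟩, ?_⟩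
  have e1 : (q : ℝ) * t = ((i:ℕ):ℝ) * t / ((2^m:ℕ):ℝ) + t / ((2^m:ℕ):ℝ) := by
    rw [hq]; push_cast; field_simp
  have e2 : (r : ℝ) * t = ((i:ℕ):ℝ) * t / ((2^m:ℕ):ℝ) := by
    rw [hr]; push_cast; field_simp
  simp only [mem_setOf_eq, e1, e2]
  exact le_trans (le_of_lt hi) (le_abs_self _)

lemma Oev_inter_null (B : ℝ → Ω → ℝ) (t δ : ℝ) (ht : 0 < t) (hδ : 0 < δ)
    (hCont : ∀ᵐ ω ∂(ℙ : Measure Ω), Continuous fun s => B s ω) :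
    (ℙ : Measure Ω) (⋂ m, Oev B t δ m) = 0 := by
  rw [measure_eq_zero_iff_ae_notMem]
  filter_upwards [hCont] with ω hωc
  intro hmem
  rw [mem_iInter] at hmem
  -- uniform continuity on [0, t]
  have hu : UniformContinuousOn (fun s => B s ω) (Icc 0 t) :=
    (isCompact_Icc).uniformContinuousOn_of_continuous hωc.continuousOn
  obtain ⟨d, hd, hdd⟩ := Metric.uniformContinuousOn_iff.mp hu δ hδ
  obtain ⟨m, hm⟩ := two_pow_small t d hd
  have h2 : (0:ℝ) < ((2^m : ℕ) : ℝ) := by positivity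
  have := hmem m
  rw [Oev, mem_iUnion₂] at this
  obtain ⟨⟨q, r⟩, ⟨hq1, hr1, habs⟩, hval⟩ := this
  simp only [mem_setOf_eq] at hval
  have hqt : (q:ℝ) * t ∈ Icc (0:ℝ) t := by
    constructor
    · have : (0:ℝ) ≤ (q:ℝ) := by exact_mod_cast hq1.1
      positivity
    · have h1 : (q:ℝ) ≤ 1 := by exact_mod_cast hq1.2
      nlinarith
  have hrt : (r:ℝ) * t ∈ Icc (0:ℝ) t := by
    constructor
    · have : (0:ℝ) ≤ (r:ℝ) := by exact_mod_cast hr1.1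
      positivity
    · have h1 : (r:ℝ) ≤ 1 := by exact_mod_cast hr1.2
      nlinarith
  have hdist : dist ((q:ℝ) * t) ((r:ℝ) * t) < d := by
    rw [Real.dist_eq]
    have hcast : ((2^m:ℕ):ℝ) = (2:ℝ)^m := by push_cast; ring
    have habs' : |(q:ℝ) - (r:ℝ)| ≤ 1 / ((2^m:ℕ):ℝ) := by
      rw [hcast]
      have habs2 : ((|q - r| : ℚ) : ℝ) ≤ ((1/2^m : ℚ) : ℝ) := by exact_mod_cast habs
      push_cast at habs2
      exact habs2
    calc |(q:ℝ) * t - (r:ℝ) * t| = |(q:ℝ) - (r:ℝ)| * t := by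
          rw [show (q:ℝ) * t - (r:ℝ) * t = ((q:ℝ) - (r:ℝ)) * t by ring, abs_mul, abs_of_pos ht]
      _ ≤ (1 / ((2^m:ℕ):ℝ)) * t := by
          have := abs_nonneg ((q:ℝ) - (r:ℝ))
          nlinarith
      _ = t / ((2^m:ℕ):ℝ) := by ring
      _ < d := hm
  have := hdd _ hqt _ hrt hdist
  rw [Real.dist_eq] at this
  linarith [hval, this]

end RPaux

namespace RPaux

variable {Ω : Type*} [MeasureSpace Ω]

def EmSet (B : ℝ → Ω → ℝ) (t b c : ℝ) (m : ℕ) : Set Ω :=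
  {ω | (∃ k ≤ (2^m : ℕ), c < B ((k:ℝ) * t / ((2^m : ℕ) : ℝ)) ω - B 0 ω) ∧ B t ω - B 0 ω ≤ b}

lemma EmSet_mono (B : ℝ → Ω → ℝ) (t b c : ℝ) : Monotone (EmSet B t b c) := by
  refine monotone_nat_of_le_succ (fun m => ?_)
  rintro ω ⟨⟨k, hk, hck⟩, h2⟩
  refine ⟨⟨2 * k, by rw [pow_succ]; omega, ?_⟩, h2⟩
  have heq : ((2 * k : ℕ):ℝ) * t / ((2^(m+1) : ℕ) : ℝ) = (k:ℝ) * t / ((2^m : ℕ) : ℝ) := by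
    have hne : ((2:ℝ))^m ≠ 0 := by positivity
    push_cast [pow_succ]
    field_simp
  rw [heq]
  exact hck

end RPaux

open RPaux

/-- A standard one-dimensional Brownian motion started at `0`: continuous paths,
independent increments, with `B_t - B_s` Gaussian of variance `t - s`. -/
def IsStandardBM {Ω : Type*} [MeasureSpace Ω] (B : ℝ → Ω → ℝ) : Prop :=
  IsProbabilityMeasure (ℙ : Measure Ω) ∧
  (∀ t, Measurable (B t)) ∧
  (∀ᵐ ω, B 0 ω = 0) ∧
  (∀ᵐ ω, Continuous fun t => B t ω) ∧
  (∀ s t : ℝ, 0 ≤ s → s ≤ t →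
    Measure.map (fun ω => B t ω - B s ω) ℙ = gaussianReal 0 (Real.toNNReal (t - s))) ∧
  (∀ n : ℕ, ∀ ts : Fin (n + 1) → ℝ, Monotone ts → (∀ i, 0 ≤ ts i) →
    iIndepFun
      (fun i : Fin n => fun ω => B (ts i.succ) ω - B (ts i.castSucc) ω) ℙ)

/-- Reflection principle: `P(S_t ≥ a, B_t ≤ b) = P(B_t ≥ 2a − b)`. -/
theorem reflection_principle {Ω : Type*} [MeasureSpace Ω] (B : ℝ → Ω → ℝ)
    (hB : IsStandardBM B) (t a b : ℝ) (ht : 0 < t) (ha : 0 ≤ a) (hb : b ≤ a) :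
    ℙ {ω | a ≤ (⨆ s : Icc (0:ℝ) t, B s ω) ∧ B t ω ≤ b} = ℙ {ω | 2 * a - b ≤ B t ω} := by
  classical
  obtain ⟨hP, hMeas, h0, hCont, hGauss, hInd⟩ := hB
  haveI := hP
  haveI : Nonempty (Icc (0:ℝ) t) := ⟨⟨0, Set.mem_Icc.2 ⟨le_refl 0, ht.le⟩⟩⟩
  set L := ℙ {ω | a ≤ (⨆ s : Icc (0:ℝ) t, B s ω) ∧ B t ω ≤ b} with hL
  have hpow : ∀ m : ℕ, 0 < 2^m := fun m => pow_pos (by norm_num) m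
  have hshift : ∀ c : ℝ, ℙ {ω | c ≤ B t ω - B 0 ω} = ℙ {ω | c ≤ B t ω} := by
    intro c
    apply measure_congr
    filter_upwards [h0] with ω hω
    have : (c ≤ B t ω - B 0 ω) = (c ≤ B t ω) := by rw [hω, sub_zero]
    exact this
  -- upper bound: L ≤ P(B_t ≥ 2(a-η) - b) for every η > 0
  have hupper : ∀ η : ℝ, 0 < η → L ≤ ℙ {ω | 2 * (a - η) - b ≤ B t ω} := by
    intro η hη
    have hsub : {ω | a ≤ (⨆ s : Icc (0:ℝ) t, B s ω) ∧ B t ω ≤ b}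
        ≤ᵐ[ℙ] ⋃ m, EmSet B t b (a - η) m := by
      filter_upwards [h0, hCont] with ω hω0 hωc
      rintro ⟨hsup, hbt⟩
      have hbdd : BddAbove (range fun s : Icc (0:ℝ) t => B s ω) := by
        have h1 : BddAbove ((fun u => B u ω) '' Icc (0:ℝ) t) :=
          isCompact_Icc.bddAbove_image hωc.continuousOn
        have h2 : (range fun s : Icc (0:ℝ) t => B s ω) ⊆ (fun u => B u ω) '' Icc (0:ℝ) t := by
          rintro _ ⟨s, rfl⟩
          exact ⟨s.1, s.2, rfl⟩
        exact BddAbove.mono h2 h1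
      have hex : ∃ s : Icc (0:ℝ) t, a - η < B s ω := by
        by_contra hcon
        push_neg at hcon
        have h1 : (⨆ s : Icc (0:ℝ) t, B s ω) ≤ a - η := ciSup_le hcon
        linarith
      obtain ⟨⟨s, hs⟩, hcs⟩ := hex
      have hopen : IsOpen {u : ℝ | a - η < B u ω} := isOpen_lt continuous_const hωc
      obtain ⟨ε, hε, hball⟩ := Metric.isOpen_iff.mp hopen s hcs
      obtain ⟨m, k, hk, hnear⟩ := dyadic_near t ht s hs ε hε
      have hpt : a - η < B ((k:ℝ) * t / ((2^m : ℕ) : ℝ)) ω :=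
        hball (show (k:ℝ) * t / ((2^m : ℕ) : ℝ) ∈ Metric.ball s ε by
          rw [Metric.mem_ball, Real.dist_eq]; exact hnear)
      exact mem_iUnion.2 ⟨m, ⟨⟨k, hk, by rw [hω0, sub_zero]; exact hpt⟩,
        by rw [hω0, sub_zero]; exact hbt⟩⟩
    calc L ≤ ℙ (⋃ m, EmSet B t b (a - η) m) := measure_mono_ae hsub
      _ = ⨆ m, ℙ (EmSet B t b (a - η) m) := (EmSet_mono B t b (a - η)).measure_iUnion
      _ ≤ ℙ {ω | 2 * (a - η) - b ≤ B t ω - B 0 ω} :=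
          iSup_le (fun m => grid_upper B t (2^m) hMeas ht (hpow m) hGauss hInd (a - η) b)
      _ = ℙ {ω | 2 * (a - η) - b ≤ B t ω} := hshift _
  -- L ≤ R
  have hLR : L ≤ ℙ {ω | 2 * a - b ≤ B t ω} := by
    have hji : ∀ j : ℕ, L ≤ ℙ {ω | 2 * (a - 1/((j:ℝ)+1)) - b ≤ B t ω} :=
      fun j => hupper _ (by positivity)
    have hmeasj : ∀ j : ℕ, NullMeasurableSet {ω : Ω | 2 * (a - 1/((j:ℝ)+1)) - b ≤ B t ω} ℙ :=
      fun j => (measurableSet_le measurable_const (hMeas t)).nullMeasurableSet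
    have hanti : Antitone (fun j : ℕ => {ω : Ω | 2 * (a - 1/((j:ℝ)+1)) - b ≤ B t ω}) := by
      intro i j hij ω hω
      simp only [mem_setOf_eq] at *
      have h1 : 1/((j:ℝ)+1) ≤ 1/((i:ℝ)+1) :=
        one_div_le_one_div_of_le (by positivity)
          (by exact_mod_cast Nat.succ_le_succ hij)
      linarith
    have hiInf := hanti.measure_iInter hmeasj ⟨0, measure_ne_top _ _⟩
    have hinter : (⋂ j : ℕ, {ω : Ω | 2 * (a - 1/((j:ℝ)+1)) - b ≤ B t ω})
        = {ω : Ω | 2 * a - b ≤ B t ω} := by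
      ext ω
      simp only [mem_iInter, mem_setOf_eq]
      constructor
      · intro h
        by_contra hlt
        push_neg at hlt
        obtain ⟨j, hj⟩ := exists_nat_one_div_lt
          (show (0:ℝ) < (2*a - b - B t ω)/2 by linarith)
        have := h j
        linarith
      · intro h j
        have : (0:ℝ) < 1/((j:ℝ)+1) := by positivity
        linarith
    rw [hinter] at hiInf
    rw [hiInf]
    exact le_iInf hji
  -- the Gaussian law of B_t has no atom
  have hatom : ℙ {ω | B t ω = 2 * a - b} = 0 := by
    have h1 : ℙ {ω | B t ω = 2 * a - b} = ℙ {ω | B t ω - B 0 ω = 2 * a - b} := by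
      apply measure_congr
      filter_upwards [h0] with ω hω
      have : (B t ω = 2*a - b) = (B t ω - B 0 ω = 2*a - b) := by rw [hω, sub_zero]
      exact this
    rw [h1]
    have hmap := hGauss 0 t le_rfl ht.le
    rw [sub_zero] at hmap
    have hpre : {ω : Ω | B t ω - B 0 ω = 2*a - b}
        = (fun ω => B t ω - B 0 ω) ⁻¹' {2*a - b} := by
      ext ω; simp [mem_preimage]
    rw [hpre, ← Measure.map_apply (f := fun ω => B t ω - B 0 ω) ((hMeas t).sub (hMeas 0)) (measurableSet_singleton _), hmap]
    exact gauss_singleton (Real.toNNReal_pos.2 ht).ne' _ _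
  -- lower bound: P(B_t ≥ 2(a+δ)-b) ≤ L for every δ > 0
  have hlow : ∀ δ : ℝ, 0 < δ → ℙ {ω | 2 * (a + δ) - b ≤ B t ω} ≤ L := by
    intro δ hδ
    have hkey : ∀ m : ℕ, ℙ {ω | 2 * (a + δ) - b ≤ B t ω} ≤ L + ℙ (Oev B t δ m) := by
      intro m
      have h2 := grid_lower B t (2^m) hMeas ht (hpow m) hGauss hInd a b δ ha hb hδ
      rw [← hshift (2*(a+δ) - b)]
      refine le_trans h2 (add_le_add ?_ ?_)
      · refine measure_mono_ae ?_
        filter_upwards [h0, hCont] with ω hω0 hωc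
        rintro ⟨⟨k, hk, hck⟩, h2'⟩
        rw [hω0, sub_zero] at hck h2'
        have hbdd : BddAbove (range fun s : Icc (0:ℝ) t => B s ω) := by
          have h1 : BddAbove ((fun u => B u ω) '' Icc (0:ℝ) t) :=
            isCompact_Icc.bddAbove_image hωc.continuousOn
          have h2 : (range fun s : Icc (0:ℝ) t => B s ω) ⊆ (fun u => B u ω) '' Icc (0:ℝ) t := by
            rintro _ ⟨s, rfl⟩
            exact ⟨s.1, s.2, rfl⟩
          exact BddAbove.mono h2 h1
        have hp : ((k:ℝ) * t / ((2^m : ℕ) : ℝ)) ∈ Icc (0:ℝ) t := by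
          constructor
          · positivity
          · have hk' : (k:ℝ) ≤ ((2^m : ℕ):ℝ) := by exact_mod_cast hk
            rw [div_le_iff₀ (by positivity : (0:ℝ) < ((2^m : ℕ):ℝ))]
            nlinarith
        have hle := le_ciSup hbdd (⟨_, hp⟩ : Icc (0:ℝ) t)
        exact ⟨le_of_lt (lt_of_lt_of_le hck hle), h2'⟩
      · exact measure_mono (Oev_incl B t δ ht m)
    calc ℙ {ω | 2*(a+δ) - b ≤ B t ω} ≤ ⨅ m, (L + ℙ (Oev B t δ m)) := le_iInf hkey
      _ = L + ⨅ m, ℙ (Oev B t δ m) := ENNReal.add_iInf.symm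
      _ = L + ℙ (⋂ m, Oev B t δ m) := by
          rw [(Oev_antitone B t δ).measure_iInter
            (fun m => (measurableSet_Oev B hMeas t δ m).nullMeasurableSet)
            ⟨0, measure_ne_top _ _⟩]
      _ = L := by rw [Oev_inter_null B t δ ht hδ hCont, add_zero]
  -- R ≤ L
  have hRL : ℙ {ω | 2 * a - b ≤ B t ω} ≤ L := by
    have hmono : Monotone (fun j : ℕ => {ω : Ω | 2 * (a + 1/((j:ℝ)+1)) - b ≤ B t ω}) := by
      intro i j hij ω hω
      simp only [mem_setOf_eq] at *
      have h1 : 1/((j:ℝ)+1) ≤ 1/((i:ℝ)+1) :=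
        one_div_le_one_div_of_le (by positivity)
          (by exact_mod_cast Nat.succ_le_succ hij)
      linarith
    have hunion : (⋃ j : ℕ, {ω : Ω | 2 * (a + 1/((j:ℝ)+1)) - b ≤ B t ω})
        = {ω : Ω | 2 * a - b < B t ω} := by
      ext ω
      simp only [mem_iUnion, mem_setOf_eq]
      constructor
      · rintro ⟨j, hj⟩
        have : (0:ℝ) < 1/((j:ℝ)+1) := by positivity
        linarith
      · intro h
        obtain ⟨j, hj⟩ := exists_nat_one_div_lt
          (show (0:ℝ) < (B t ω - (2*a - b))/2 by linarith)
        exact ⟨j, by linarith⟩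
    have hlt : ℙ {ω : Ω | 2*a - b < B t ω} ≤ L := by
      rw [← hunion, hmono.measure_iUnion]
      exact iSup_le (fun j => hlow _ (by positivity))
    have hsplit : {ω : Ω | 2*a - b ≤ B t ω}
        ⊆ {ω : Ω | 2*a - b < B t ω} ∪ {ω : Ω | B t ω = 2*a - b} := by
      intro ω hω
      rcases lt_or_eq_of_le (show 2*a - b ≤ B t ω from hω) with h | h
      · exact Or.inl h
      · exact Or.inr h.symm
    calc ℙ {ω : Ω | 2*a - b ≤ B t ω}
        ≤ ℙ ({ω : Ω | 2*a - b < B t ω} ∪ {ω : Ω | B t ω = 2*a - b}) := measure_mono hsplit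
      _ ≤ ℙ {ω : Ω | 2*a - b < B t ω} + ℙ {ω : Ω | B t ω = 2*a - b} := measure_union_le _ _
      _ = ℙ {ω : Ω | 2*a - b < B t ω} := by rw [hatom, add_zero]
      _ ≤ L := hlt
  exact le_antisymm hLR hRL
end

section
/- Let T₁ and T₁' be independent random variables, each with Laplace transform E[exp(−(λ²/2)T₁)] = λ/sinh(λ) (the first hitting time of 1 by a 3-dimensional Bessel process started at 0). Then E[√(T₁ + T₁')] = √(2/π). -/
open MeasureTheory ProbabilityTheory Set Filter Topology Real

lemma nonneg_of_deriv_nonneg {h h' : ℝ → ℝ} (hd : ∀ x, HasDerivAt h (h' x) x)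
    (h0 : h 0 = 0) (hnn : ∀ x, 0 ≤ x → 0 ≤ h' x) : ∀ x, 0 ≤ x → 0 ≤ h x := by
  intro x hx
  have hmono : MonotoneOn h (Ici 0) := by
    apply monotoneOn_of_deriv_nonneg (convex_Ici 0)
      (fun y _ => (hd y).continuousAt.continuousWithinAt)
      (fun y _ => (hd y).differentiableAt.differentiableWithinAt)
    intro y hy
    rw [(hd y).deriv]
    exact hnn y (le_of_lt (by simpa using hy))
  have := hmono (self_mem_Ici) (by exact hx) hx
  simpa [h0] using this

lemma aux1 {x : ℝ} (hx : 0 ≤ x) : 0 ≤ x * Real.cosh x - Real.sinh x := by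
  have := nonneg_of_deriv_nonneg (h := fun x => x * Real.cosh x - Real.sinh x)
    (h' := fun x => x * Real.sinh x) (fun x => ?_) (by simp)
    (fun x hx => mul_nonneg hx (Real.sinh_nonneg_iff.mpr hx)) x hx
  · exact this
  · have := ((hasDerivAt_id x).mul (Real.hasDerivAt_cosh x)).sub (Real.hasDerivAt_sinh x)
    refine this.congr_deriv ?_
    simp only [id_eq]
    ring

lemma aux2 {x : ℝ} (hx : 0 ≤ x) : x * Real.cosh x - Real.sinh x ≤ x ^ 2 / 2 * Real.sinh x := by
  have := nonneg_of_deriv_nonneg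
    (h := fun x => x ^ 2 / 2 * Real.sinh x - (x * Real.cosh x - Real.sinh x))
    (h' := fun x => x ^ 2 / 2 * Real.cosh x) (fun x => ?_) (by simp)
    (fun x hx => mul_nonneg (by positivity) (Real.cosh_pos x).le) x hx
  · linarith
  · have h1 := (((hasDerivAt_pow 2 x).div_const 2).mul (Real.hasDerivAt_sinh x)).sub
      (((hasDerivAt_id x).mul (Real.hasDerivAt_cosh x)).sub (Real.hasDerivAt_sinh x))
    refine h1.congr_deriv ?_
    simp only [id_eq]
    ring

noncomputable def cothAux (x : ℝ) : ℝ := Real.cosh x / Real.sinh x - 1 / x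

lemma cothAux_bound {x : ℝ} (hx : 0 ≤ x) : 0 ≤ cothAux x ∧ cothAux x ≤ x / 2 := by
  rcases eq_or_lt_of_le hx with rfl | hx'
  · simp [cothAux]
  · have hs : 0 < Real.sinh x := Real.sinh_pos_iff.mpr hx'
    have hform : cothAux x = (x * Real.cosh x - Real.sinh x) / (x * Real.sinh x) := by
      unfold cothAux; field_simp
    constructor
    · rw [hform]; exact div_nonneg (aux1 hx) (by positivity)
    · rw [hform, div_le_iff₀ (by positivity)]
      nlinarith [aux2 hx]

lemma coth_deriv {x : ℝ} (hx : (0:ℝ) < x) :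
    HasDerivAt cothAux (1 / x ^ 2 - 1 / Real.sinh x ^ 2) x := by
  have hs : Real.sinh x ≠ 0 := (Real.sinh_pos_iff.mpr hx).ne'
  have h1 : HasDerivAt (fun x => Real.cosh x / Real.sinh x)
      ((Real.sinh x * Real.sinh x - Real.cosh x * Real.cosh x) / Real.sinh x ^ 2) x :=
    (Real.hasDerivAt_cosh x).div (Real.hasDerivAt_sinh x) hs
  have h2 : HasDerivAt (fun x : ℝ => 1 / x) (-(1 / x ^ 2)) x := by
    simpa using (hasDerivAt_inv hx.ne')
  have h3 := h1.sub h2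
  refine h3.congr_deriv ?_
  have hc : Real.cosh x ^ 2 - Real.sinh x ^ 2 = 1 := Real.cosh_sq_sub_sinh_sq x
  have : Real.sinh x * Real.sinh x - Real.cosh x * Real.cosh x = -1 := by nlinarith
  rw [this]
  field_simp
  ring

lemma coth_tendsto_one : Tendsto cothAux atTop (𝓝 1) := by
  have heq : ∀ᶠ x in atTop,
      (1 + Real.exp (-x) * Real.exp (-x)) / (1 - Real.exp (-x) * Real.exp (-x)) - 1 / x
        = cothAux x := by
    filter_upwards [eventually_gt_atTop (0:ℝ)] with x hx
    unfold cothAux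
    have key : Real.exp (-x) * Real.exp x = 1 := by rw [← Real.exp_add]; simp
    have he : Real.exp x - Real.exp (-x) ≠ 0 := by
      have : Real.exp (-x) < Real.exp x := Real.exp_lt_exp.mpr (by linarith)
      linarith
    have hden : 1 - Real.exp (-x) * Real.exp (-x) ≠ 0 := by
      have h1 : Real.exp (-x) < 1 := Real.exp_lt_one_iff.mpr (by linarith)
      have h3 : 0 < Real.exp (-x) := Real.exp_pos _
      nlinarith
    rw [Real.cosh_eq, Real.sinh_eq]
    have h2 : (Real.exp x - Real.exp (-x)) / 2 ≠ 0 := by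
      intro h; apply he; linarith
    congr 1
    rw [div_eq_div_iff hden h2]
    linear_combination (Real.exp (-x)) * key
  have hlim : Tendsto (fun x : ℝ =>
      (1 + Real.exp (-x) * Real.exp (-x)) / (1 - Real.exp (-x) * Real.exp (-x)) - 1 / x) atTop
      (𝓝 ((1 + 0*0)/(1 - 0*0) - 0)) := by
    apply Tendsto.sub
    · exact (tendsto_const_nhds.add
        (Real.tendsto_exp_neg_atTop_nhds_zero.mul Real.tendsto_exp_neg_atTop_nhds_zero)).div
        (tendsto_const_nhds.sub
        (Real.tendsto_exp_neg_atTop_nhds_zero.mul Real.tendsto_exp_neg_atTop_nhds_zero))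
        (by norm_num)
    · exact (tendsto_inv_atTop_zero (𝕜 := ℝ)).congr (fun x => (one_div x).symm)
  have : ((1:ℝ) + 0*0)/(1 - 0*0) - 0 = 1 := by norm_num
  rw [this] at hlim
  exact hlim.congr' heq

lemma coth_nonneg_deriv : ∀ x ∈ Ioi (0:ℝ), 0 ≤ 1 / x ^ 2 - 1 / Real.sinh x ^ 2 := by
  intro x hx
  have hx' : (0:ℝ) < x := hx
  have h1 : x < Real.sinh x := Real.self_lt_sinh_iff.mpr hx'
  have : 1 / Real.sinh x ^ 2 ≤ 1 / x ^ 2 := by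
    apply one_div_le_one_div_of_le (by positivity); nlinarith
  linarith

lemma coth_cont : ContinuousWithinAt cothAux (Ici 0) 0 := by
  have h0 : cothAux 0 = 0 := by simp [cothAux]
  rw [ContinuousWithinAt, h0]
  apply squeeze_zero' (g := fun x => x / 2)
  · filter_upwards [self_mem_nhdsWithin] with x hx
    exact (cothAux_bound hx).1
  · filter_upwards [self_mem_nhdsWithin] with x hx
    exact (cothAux_bound hx).2
  · have : Tendsto (fun x : ℝ => x / 2) (𝓝 0) (𝓝 (0/2)) :=
      (continuous_id.div_const 2).tendsto 0
    simpa using this.mono_left nhdsWithin_le_nhds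

lemma coth_integrable :
    IntegrableOn (fun x : ℝ => 1 / x ^ 2 - 1 / Real.sinh x ^ 2) (Ioi 0) :=
  integrableOn_Ioi_deriv_of_nonneg coth_cont (fun x hx => coth_deriv hx)
    coth_nonneg_deriv coth_tendsto_one

lemma coth_integral :
    ∫ x in Ioi (0:ℝ), (1 / x ^ 2 - 1 / Real.sinh x ^ 2) = 1 := by
  have := integral_Ioi_of_hasDerivAt_of_nonneg coth_cont (fun x hx => coth_deriv hx)
    coth_nonneg_deriv coth_tendsto_one
  simpa [cothAux] using this

lemma gamma_half : ∫ x in Ioi (0:ℝ), Real.exp (-x) * x ^ (-(1:ℝ)/2) = Real.sqrt Real.pi := by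
  rw [show (-(1:ℝ)/2) = (1:ℝ)/2 - 1 by norm_num,
    ← Real.Gamma_eq_integral (by norm_num : (0:ℝ) < 1/2), Real.Gamma_one_half_eq]

lemma meas_aux (s : ℝ) : Measurable fun t : ℝ => (1 - Real.exp (-(s*t))) * t ^ (-(3:ℝ)/2) := by
  fun_prop

lemma int_s (s : ℝ) (hs : 0 < s) :
    IntegrableOn (fun t : ℝ => (1 - Real.exp (-(s*t))) * t ^ (-(3:ℝ)/2)) (Ioi 0) := by
  rw [← Ioc_union_Ioi_eq_Ioi (zero_le_one (α := ℝ))]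
  apply IntegrableOn.union
  · -- on Ioc 0 1, dominate by s * t ^ (-1/2)
    apply Integrable.mono' (g := fun t : ℝ => s * t ^ (-(1:ℝ)/2))
    · apply Integrable.const_mul
      have hii : IntervalIntegrable (fun x : ℝ => x ^ (-(1:ℝ)/2)) volume 0 1 :=
        intervalIntegral.intervalIntegrable_rpow' (by norm_num)
      exact (intervalIntegrable_iff_integrableOn_Ioc_of_le zero_le_one).mp hii
    · exact (meas_aux s).aestronglyMeasurable
    · rw [ae_restrict_iff' measurableSet_Ioc]
      filter_upwards with t ht
      obtain ⟨ht0, _⟩ := ht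
      have h1 : 0 ≤ 1 - Real.exp (-(s*t)) := by
        have : Real.exp (-(s*t)) ≤ 1 := Real.exp_le_one_iff.mpr (neg_nonpos.mpr (by positivity))
        linarith
      have h2 : 1 - Real.exp (-(s*t)) ≤ s * t := by
        have := Real.add_one_le_exp (-(s*t))
        linarith
      have h3 : (0:ℝ) < t ^ (-(3:ℝ)/2) := Real.rpow_pos_of_pos ht0 _
      rw [Real.norm_eq_abs, abs_of_nonneg (by positivity)]
      calc (1 - Real.exp (-(s*t))) * t ^ (-(3:ℝ)/2) ≤ (s*t) * t ^ (-(3:ℝ)/2) := by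
            apply mul_le_mul_of_nonneg_right h2 h3.le
        _ = s * t ^ (-(1:ℝ)/2) := by
            rw [mul_assoc]
            congr 1
            nth_rewrite 1 [← Real.rpow_one t]
            rw [← Real.rpow_add ht0]
            norm_num
  · apply Integrable.mono' (g := fun t : ℝ => t ^ (-(3:ℝ)/2))
    · exact integrableOn_Ioi_rpow_of_lt (by norm_num) one_pos
    · exact (meas_aux s).aestronglyMeasurable
    · rw [ae_restrict_iff' measurableSet_Ioi]
      filter_upwards with t ht
      have ht0 : (0:ℝ) < t := lt_trans one_pos ht
      have h1 : 0 ≤ 1 - Real.exp (-(s*t)) := by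
        have : Real.exp (-(s*t)) ≤ 1 := Real.exp_le_one_iff.mpr (neg_nonpos.mpr (by positivity))
        linarith
      have h3 : (0:ℝ) < t ^ (-(3:ℝ)/2) := Real.rpow_pos_of_pos ht0 _
      rw [Real.norm_eq_abs, abs_of_nonneg (by positivity)]
      calc (1 - Real.exp (-(s*t))) * t ^ (-(3:ℝ)/2) ≤ 1 * t ^ (-(3:ℝ)/2) := by
            apply mul_le_mul_of_nonneg_right _ h3.le
            have := Real.exp_pos (-(s*t)); linarith
        _ = t ^ (-(3:ℝ)/2) := one_mul _

lemma C_val : ∫ t in Ioi (0:ℝ), (1 - Real.exp (-t)) * t ^ (-(3:ℝ)/2)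
    = 2 * Real.sqrt Real.pi := by
  set F : ℝ → ℝ := fun t => 2 * t ^ (-(1:ℝ)/2) * (Real.exp (-t) - 1) with hF
  set g1 : ℝ → ℝ := fun t => (1 - Real.exp (-t)) * t ^ (-(3:ℝ)/2) with hg1
  set g2 : ℝ → ℝ := fun t => 2 * (Real.exp (-t) * t ^ (-(1:ℝ)/2)) with hg2
  have hg1int : IntegrableOn g1 (Ioi 0) := by
    have := int_s 1 one_pos; simpa [hg1] using this
  have hg2int : IntegrableOn g2 (Ioi 0) := by
    apply Integrable.const_mul
    have h := Real.GammaIntegral_convergent (by norm_num : (0:ℝ) < 1/2)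
    rw [show (1:ℝ)/2 - 1 = -(1:ℝ)/2 from by norm_num] at h
    exact h
  have hderiv : ∀ t ∈ Ioi (0:ℝ), HasDerivAt F (g1 t - g2 t) t := by
    intro t ht
    have ht' : (0:ℝ) < t := ht
    have h1 : HasDerivAt (fun t : ℝ => 2 * t ^ (-(1:ℝ)/2))
        (2 * (-(1:ℝ)/2 * t ^ (-(1:ℝ)/2 - 1))) t :=
      (Real.hasDerivAt_rpow_const (Or.inl ht'.ne')).const_mul 2
    have h2 : HasDerivAt (fun t : ℝ => Real.exp (-t) - 1) (-Real.exp (-t)) t := by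
      have := ((hasDerivAt_id t).neg).exp.sub_const 1
      simpa using this
    have h3 := h1.mul h2
    refine h3.congr_deriv ?_
    rw [show (-(1:ℝ)/2 - 1) = -(3:ℝ)/2 by norm_num]
    simp only [hg1, hg2]
    ring
  have hcont : ContinuousWithinAt F (Ici 0) 0 := by
    have h0 : F 0 = 0 := by simp [hF]
    rw [ContinuousWithinAt, h0]
    apply squeeze_zero_norm' (a := fun t : ℝ => 2 * Real.sqrt t)
    · filter_upwards [self_mem_nhdsWithin] with t (ht : 0 ≤ t)
      rcases eq_or_lt_of_le ht with rfl | ht'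
      · simp [hF, Real.zero_rpow (by norm_num : (-(1:ℝ)/2) ≠ 0)]
      · have he1 : Real.exp (-t) ≤ 1 := Real.exp_le_one_iff.mpr (by linarith)
        have he2 : 1 - t ≤ Real.exp (-t) := by
          have := Real.add_one_le_exp (-t); linarith
        have hrp : (0:ℝ) < t ^ (-(1:ℝ)/2) := Real.rpow_pos_of_pos ht' _
        rw [hF, Real.norm_eq_abs, abs_mul, abs_of_nonneg (by positivity : (0:ℝ) ≤ 2 * t ^ (-(1:ℝ)/2)), abs_of_nonpos (by linarith)]
        calc 2 * t ^ (-(1:ℝ)/2) * -(Real.exp (-t) - 1)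
            ≤ 2 * t ^ (-(1:ℝ)/2) * t := by
              apply mul_le_mul_of_nonneg_left (by linarith) (by positivity)
          _ = 2 * Real.sqrt t := by
              rw [mul_assoc, Real.sqrt_eq_rpow]
              congr 1
              nth_rewrite 2 [← Real.rpow_one t]
              rw [← Real.rpow_add ht']
              norm_num
    · have hc : Tendsto (fun t : ℝ => 2 * Real.sqrt t) (𝓝 0) (𝓝 (2 * Real.sqrt 0)) :=
        (continuous_const.mul Real.continuous_sqrt).tendsto 0
      simp only [Real.sqrt_zero, mul_zero] at hc
      exact hc.mono_left nhdsWithin_le_nhds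
  have htop : Tendsto F atTop (𝓝 0) := by
    have h1 : Tendsto (fun t : ℝ => 2 * t ^ (-((1:ℝ)/2))) atTop (𝓝 (2 * 0)) :=
      (tendsto_rpow_neg_atTop (by norm_num)).const_mul 2
    have h2 : Tendsto (fun t : ℝ => Real.exp (-t) - 1) atTop (𝓝 (0 - 1)) :=
      Real.tendsto_exp_neg_atTop_nhds_zero.sub_const 1
    have := h1.mul h2
    norm_num at this
    convert this using 2 with t
    rw [hF]
    norm_num
  have key := integral_Ioi_of_hasDerivAt_of_tendsto hcont hderiv
    (hg1int.sub hg2int) htop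
  have hF0 : F 0 = 0 := by simp [hF]
  rw [hF0, sub_zero] at key
  have hsub := integral_sub hg1int hg2int
  rw [key] at hsub
  have hg2val : ∫ t in Ioi (0:ℝ), g2 t = 2 * Real.sqrt Real.pi := by
    rw [hg2]
    rw [MeasureTheory.integral_const_mul]
    rw [gamma_half]
  have : ∫ t in Ioi (0:ℝ), g1 t = ∫ t in Ioi (0:ℝ), g2 t := by linarith [hsub.symm]
  rw [hg1] at this
  rw [this, hg2val]

lemma L1 (s : ℝ) (hs : 0 ≤ s) :
    ∫ u in Ioi (0:ℝ), (1 - Real.exp (-(s*u))) * u ^ (-(3:ℝ)/2)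
      = 2 * Real.sqrt Real.pi * Real.sqrt s := by
  rcases eq_or_lt_of_le hs with rfl | hs'
  · simp
  · have hsub := integral_comp_mul_left_Ioi
      (fun t => (1 - Real.exp (-t)) * t ^ (-(3:ℝ)/2)) 0 hs'
    rw [mul_zero, C_val] at hsub
    have hcongr : ∫ x in Ioi (0:ℝ), (fun t => (1 - Real.exp (-t)) * t ^ (-(3:ℝ)/2)) (s*x)
        = ∫ x in Ioi (0:ℝ), s ^ (-(3:ℝ)/2) * ((1 - Real.exp (-(s*x))) * x ^ (-(3:ℝ)/2)) := by
      apply setIntegral_congr_fun measurableSet_Ioi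
      intro x hx
      dsimp only
      rw [Real.mul_rpow hs (le_of_lt hx)]
      ring
    rw [hcongr] at hsub
    rw [MeasureTheory.integral_const_mul] at hsub
    have hne : s ^ (-(3:ℝ)/2) ≠ 0 := (Real.rpow_pos_of_pos hs' _).ne'
    have hkey : ∫ x in Ioi (0:ℝ), (1 - Real.exp (-(s*x))) * x ^ (-(3:ℝ)/2)
        = s⁻¹ * (2 * Real.sqrt Real.pi) / s ^ (-(3:ℝ)/2) := by
      rw [eq_div_iff hne, mul_comm]; rw [smul_eq_mul] at hsub
      linarith [hsub]
    rw [hkey]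
    rw [show (-(3:ℝ)/2 : ℝ) = -((3:ℝ)/2) by norm_num, Real.rpow_neg hs]
    have h32 : s ^ ((3:ℝ)/2) = s * Real.sqrt s := by
      rw [show (3:ℝ)/2 = 1 + 1/2 by norm_num, Real.rpow_add hs', Real.rpow_one,
        ← Real.sqrt_eq_rpow]
    rw [h32]
    have hsq : Real.sqrt s ≠ 0 := (Real.sqrt_pos.mpr hs').ne'
    rw [div_inv_eq_mul]
    field_simp


noncomputable def Gfun (u : ℝ) : ℝ :=
  (1 - (Real.sqrt (2*u) / Real.sinh (Real.sqrt (2*u)))^2) * u ^ (-(3:ℝ)/2)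

lemma half_pow_val : ((1:ℝ)/2) ^ (-(3:ℝ)/2) = 2 * Real.sqrt 2 := by
  have h1 : ((1:ℝ)/2) ^ (-(3:ℝ)/2) = (2:ℝ) ^ ((3:ℝ)/2) := by
    rw [one_div, show (-(3:ℝ)/2 : ℝ) = -((3:ℝ)/2) by norm_num,
      Real.inv_rpow (by norm_num : (0:ℝ) ≤ 2), ← Real.rpow_neg (by norm_num : (0:ℝ) ≤ 2)]
    norm_num
  rw [h1, show (3:ℝ)/2 = 1 + 1/2 by norm_num, Real.rpow_add two_pos, Real.rpow_one,
    ← Real.sqrt_eq_rpow]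

lemma Gfun_comp {x : ℝ} (hx : 0 < x) :
    (|(2:ℝ)| * x ^ ((2:ℝ)-1)) • Gfun ((1/2) * x ^ (2:ℝ))
      = 2 * (2 * Real.sqrt 2 * (1 / x ^ 2 - 1 / Real.sinh x ^ 2)) := by
  have hs : Real.sinh x ≠ 0 := (Real.sinh_pos_iff.mpr hx).ne'
  have hrp2 : x ^ (2:ℝ) = x ^ 2 := by
    rw [← Real.rpow_natCast x 2]; norm_num
  have hsqrt : Real.sqrt (2 * ((1/2) * x ^ 2)) = x := by
    rw [show (2:ℝ) * ((1/2) * x ^ 2) = x ^ 2 by ring, Real.sqrt_sq hx.le]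
  have hmul : ((1/2 : ℝ) * x ^ 2) ^ (-(3:ℝ)/2)
      = (2 * Real.sqrt 2) * (x ^ 3)⁻¹ := by
    rw [Real.mul_rpow (by norm_num) (by positivity), half_pow_val]
    congr 1
    rw [← Real.rpow_natCast x 2, ← Real.rpow_mul hx.le, ← Real.rpow_natCast x 3,
      ← Real.rpow_neg hx.le]
    norm_num
  rw [smul_eq_mul, Gfun, hrp2, hsqrt, hmul]
  rw [show ((2:ℝ)-1) = 1 by norm_num, Real.rpow_one, abs_of_pos two_pos]
  have hx3 : x ^ 3 ≠ 0 := by positivity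
  field_simp

lemma Gfun_int_val :
    IntegrableOn Gfun (Ioi 0) ∧ ∫ u in Ioi (0:ℝ), Gfun u = 2 * Real.sqrt 2 := by
  set D : ℝ → ℝ := fun x => 2 * Real.sqrt 2 * (1 / x ^ 2 - 1 / Real.sinh x ^ 2) with hD
  have hDint : IntegrableOn D (Ioi 0) := coth_integrable.const_mul _
  have hDval : ∫ x in Ioi (0:ℝ), D x = 2 * Real.sqrt 2 := by
    rw [hD]
    rw [MeasureTheory.integral_const_mul, coth_integral, mul_one]
  have h2Dint : IntegrableOn (fun x => 2 * D x) (Ioi 0) := hDint.const_mul _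
  -- the rpow substitution function
  have hEq : EqOn (fun x : ℝ => (|(2:ℝ)| * x ^ ((2:ℝ)-1)) • (fun y => Gfun ((1/2) * y)) (x ^ (2:ℝ)))
      (fun x => 2 * D x) (Ioi 0) := by
    intro x hx
    exact Gfun_comp hx
  have hsub_int : IntegrableOn (fun y : ℝ => Gfun ((1/2) * y)) (Ioi 0) := by
    rw [← integrableOn_Ioi_comp_rpow_iff _ (two_ne_zero (α := ℝ))]
    exact (h2Dint.congr_fun hEq.symm measurableSet_Ioi : _)
  have hGint : IntegrableOn Gfun (Ioi 0) := by
    have := (integrableOn_Ioi_comp_mul_left_iff Gfun 0 (by norm_num : (0:ℝ) < 1/2)).mp hsub_int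
    simpa using this
  refine ⟨hGint, ?_⟩
  have h1 : ∫ x in Ioi (0:ℝ), (|(2:ℝ)| * x ^ ((2:ℝ)-1)) • (fun y => Gfun ((1/2) * y)) (x ^ (2:ℝ))
      = ∫ y in Ioi (0:ℝ), Gfun ((1/2) * y) :=
    integral_comp_rpow_Ioi (fun y => Gfun ((1/2) * y)) (two_ne_zero (α := ℝ))
  have h2 : ∫ y in Ioi (0:ℝ), Gfun ((1/2) * y) = 2 * ∫ y in Ioi (0:ℝ), Gfun y := by
    have := integral_comp_mul_left_Ioi Gfun 0 (by norm_num : (0:ℝ) < 1/2)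
    rw [mul_zero] at this
    rw [this]
    rw [smul_eq_mul]
    norm_num
  have h3 : ∫ x in Ioi (0:ℝ), (|(2:ℝ)| * x ^ ((2:ℝ)-1)) • (fun y => Gfun ((1/2) * y)) (x ^ (2:ℝ))
      = ∫ x in Ioi (0:ℝ), 2 * D x := by
    exact setIntegral_congr_fun measurableSet_Ioi hEq
  have h4 : ∫ x in Ioi (0:ℝ), 2 * D x = 2 * (2 * Real.sqrt 2) := by
    rw [MeasureTheory.integral_const_mul, hDval]
  have := h1.symm.trans (h3.trans h4)
  rw [h2] at this
  linarith


lemma int_s' (s : ℝ) (hs : 0 ≤ s) :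
    IntegrableOn (fun t : ℝ => (1 - Real.exp (-(s*t))) * t ^ (-(3:ℝ)/2)) (Ioi 0) := by
  rcases eq_or_lt_of_le hs with rfl | hs'
  · have : (fun t : ℝ => (1 - Real.exp (-(0*t))) * t ^ (-(3:ℝ)/2)) = fun _ => (0:ℝ) := by
      funext t; simp
    rw [this]
    exact integrable_zero _ _ _
  · exact int_s s hs'

lemma one_sub_psi_nonneg {u : ℝ} (hu : 0 < u) :
    0 ≤ 1 - (Real.sqrt (2*u) / Real.sinh (Real.sqrt (2*u)))^2 := by
  set lam := Real.sqrt (2*u) with hlam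
  have hlampos : 0 < lam := Real.sqrt_pos.mpr (by linarith)
  have hsinh : lam < Real.sinh lam := Real.self_lt_sinh_iff.mpr hlampos
  have h1 : lam / Real.sinh lam ≤ 1 := by
    rw [div_le_one (by linarith)]; linarith
  have h2 : 0 ≤ lam / Real.sinh lam := by positivity
  nlinarith

/-- If `T₁, T₁'` are independent, each with the Laplace transform
`E[exp(−(λ²/2)T)] = λ/sinh λ` of the hitting time of `1` by a Bessel(3) process started
at `0`, then `E[√(T₁ + T₁')] = √(2/π)`. -/
theorem expectation_sqrt_sum_bessel_hitting_times
    {Ω : Type*} [MeasureSpace Ω] [IsProbabilityMeasure (ℙ : Measure Ω)]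
    (T T' : Ω → ℝ) (hmT : Measurable T) (hmT' : Measurable T')
    (hpos : ∀ᵐ ω, 0 ≤ T ω) (hpos' : ∀ᵐ ω, 0 ≤ T' ω)
    (hindep : IndepFun T T' ℙ)
    (hlap : ∀ lam : ℝ, 0 < lam →
      ∫ ω, Real.exp (-(lam ^ 2 / 2 * T ω)) = lam / Real.sinh lam)
    (hlap' : ∀ lam : ℝ, 0 < lam →
      ∫ ω, Real.exp (-(lam ^ 2 / 2 * T' ω)) = lam / Real.sinh lam) :
    ∫ ω, Real.sqrt (T ω + T' ω) = Real.sqrt (2 / Real.pi) := by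
  set S : Ω → ℝ := fun ω => T ω + T' ω with hS
  have hmS : Measurable S := hmT.add hmT'
  have hSnn : ∀ᵐ ω, 0 ≤ S ω := by
    filter_upwards [hpos, hpos'] with ω h1 h2
    exact add_nonneg h1 h2
  -- integrability of bounded exponentials
  have hexp_int : ∀ (c : ℝ), 0 ≤ c → ∀ (f : Ω → ℝ), Measurable f → (∀ᵐ ω, 0 ≤ f ω) →
      Integrable (fun ω => Real.exp (-(c * f ω))) ℙ := by
    intro c hc f hmf hf
    apply Integrable.mono' (integrable_const (1:ℝ))
    · exact (Real.measurable_exp.comp ((hmf.const_mul c).neg)).aestronglyMeasurable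
    · filter_upwards [hf] with ω hω
      rw [Real.norm_eq_abs, abs_of_pos (Real.exp_pos _)]
      exact Real.exp_le_one_iff.mpr (neg_nonpos.mpr (by positivity))
  -- Laplace transform of the sum
  have hpsi : ∀ u : ℝ, 0 < u → ∫ ω, Real.exp (-(u * S ω))
      = (Real.sqrt (2*u) / Real.sinh (Real.sqrt (2*u)))^2 := by
    intro u hu
    set lam := Real.sqrt (2*u) with hlam
    have hlampos : 0 < lam := Real.sqrt_pos.mpr (by linarith)
    have hlamsq : lam ^ 2 / 2 = u := by
      rw [hlam, Real.sq_sqrt (by linarith : (0:ℝ) ≤ 2*u)]; ring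
    have heq : ∀ ω, Real.exp (-(u * S ω))
        = Real.exp (-(lam^2/2 * T ω)) * Real.exp (-(lam^2/2 * T' ω)) := by
      intro ω
      rw [← Real.exp_add, hlamsq]
      congr 1
      simp only [hS]
      ring
    have hmeasexp : Measurable fun x : ℝ => Real.exp (-(lam^2/2 * x)) := by fun_prop
    have hind2 : IndepFun (fun ω => Real.exp (-(lam^2/2 * T ω)))
        (fun ω => Real.exp (-(lam^2/2 * T' ω))) ℙ := hindep.comp hmeasexp hmeasexp
    have hc : 0 ≤ lam^2/2 := by positivity
    have hint1 := hexp_int _ hc T hmT hpos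
    have hint2 := hexp_int _ hc T' hmT' hpos'
    calc ∫ ω, Real.exp (-(u * S ω))
        = ∫ ω, Real.exp (-(lam^2/2 * T ω)) * Real.exp (-(lam^2/2 * T' ω)) := by
          exact integral_congr_ae (Eventually.of_forall heq)
      _ = (∫ ω, Real.exp (-(lam^2/2 * T ω))) * ∫ ω, Real.exp (-(lam^2/2 * T' ω)) :=
          hind2.integral_mul_eq_mul_integral hint1.aestronglyMeasurable hint2.aestronglyMeasurable
      _ = (lam / Real.sinh lam) * (lam / Real.sinh lam) := by
          rw [hlap lam hlampos, hlap' lam hlampos]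
      _ = (lam / Real.sinh lam)^2 := (sq _).symm
  -- inner ω-integral
  have hinner : ∀ u : ℝ, 0 < u → ∫ ω, (1 - Real.exp (-(S ω * u)))
      = 1 - (Real.sqrt (2*u) / Real.sinh (Real.sqrt (2*u)))^2 := by
    intro u hu
    have hintexp : Integrable (fun ω => Real.exp (-(u * S ω))) ℙ :=
      hexp_int u hu.le S hmS hSnn
    have hcomm : (fun ω => Real.exp (-(S ω * u))) = fun ω => Real.exp (-(u * S ω)) := by
      funext ω; rw [mul_comm]
    rw [show (fun ω => (1 - Real.exp (-(S ω * u)))) = fun ω => (1 - Real.exp (-(u * S ω))) by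
      funext ω; rw [mul_comm]] at *
    rw [integral_sub (integrable_const 1) hintexp, integral_const, probReal_univ,
      one_smul, hpsi u hu]
  -- the big ENNReal computation
  have hmeas_prod : Measurable (fun p : Ω × ℝ =>
      ENNReal.ofReal ((1 - Real.exp (-(S p.1 * p.2))) * p.2 ^ (-(3:ℝ)/2))) := by
    fun_prop
  have key : ∫⁻ ω, ENNReal.ofReal (2 * Real.sqrt Real.pi * Real.sqrt (S ω)) ∂ℙ
      = ENNReal.ofReal (2 * Real.sqrt 2) := by
    have step1 : ∫⁻ ω, ENNReal.ofReal (2 * Real.sqrt Real.pi * Real.sqrt (S ω)) ∂ℙ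
        = ∫⁻ ω, ∫⁻ u in Ioi (0:ℝ),
            ENNReal.ofReal ((1 - Real.exp (-(S ω * u))) * u ^ (-(3:ℝ)/2)) ∂ℙ := by
      apply lintegral_congr_ae
      filter_upwards [hSnn] with ω hω
      rw [← L1 (S ω) hω]
      rw [MeasureTheory.ofReal_integral_eq_lintegral_ofReal (int_s' (S ω) hω)]
      filter_upwards [ae_restrict_mem measurableSet_Ioi] with u hu
      simp only [Pi.zero_apply]
      have h1 : Real.exp (-(S ω * u)) ≤ 1 :=
        Real.exp_le_one_iff.mpr (neg_nonpos.mpr (mul_nonneg hω hu.le))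
      have h2 : (0:ℝ) ≤ u ^ (-(3:ℝ)/2) := (Real.rpow_pos_of_pos (mem_Ioi.mp hu) _).le
      exact mul_nonneg (by linarith) h2
    have step2 : ∫⁻ ω, ∫⁻ u in Ioi (0:ℝ),
            ENNReal.ofReal ((1 - Real.exp (-(S ω * u))) * u ^ (-(3:ℝ)/2)) ∂ℙ
        = ∫⁻ u in Ioi (0:ℝ), ∫⁻ ω,
            ENNReal.ofReal ((1 - Real.exp (-(S ω * u))) * u ^ (-(3:ℝ)/2)) ∂ℙ := by
      exact lintegral_lintegral_swap hmeas_prod.aemeasurable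
    have step3 : ∫⁻ u in Ioi (0:ℝ), ∫⁻ ω,
            ENNReal.ofReal ((1 - Real.exp (-(S ω * u))) * u ^ (-(3:ℝ)/2)) ∂ℙ
        = ∫⁻ u in Ioi (0:ℝ), ENNReal.ofReal (Gfun u) := by
      apply setLIntegral_congr_fun measurableSet_Ioi
      intro u hu
      have hu' : (0:ℝ) < u := hu
      have hrp : (0:ℝ) ≤ u ^ (-(3:ℝ)/2) := (Real.rpow_pos_of_pos hu' _).le
      have e1 : ∫⁻ ω, ENNReal.ofReal ((1 - Real.exp (-(S ω * u))) * u ^ (-(3:ℝ)/2)) ∂ℙ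
          = ∫⁻ ω, ENNReal.ofReal (1 - Real.exp (-(S ω * u)))
              * ENNReal.ofReal (u ^ (-(3:ℝ)/2)) ∂ℙ := by
        apply lintegral_congr_ae
        filter_upwards [hSnn] with ω hω
        rw [← ENNReal.ofReal_mul]
        have : Real.exp (-(S ω * u)) ≤ 1 :=
          Real.exp_le_one_iff.mpr (neg_nonpos.mpr (mul_nonneg hω hu'.le))
        linarith
      dsimp only
      rw [e1, lintegral_mul_const _ (by fun_prop)]
      have e2 : ∫⁻ ω, ENNReal.ofReal (1 - Real.exp (-(S ω * u))) ∂ℙ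
          = ENNReal.ofReal (1 - (Real.sqrt (2*u) / Real.sinh (Real.sqrt (2*u)))^2) := by
        rw [← hinner u hu']
        rw [MeasureTheory.ofReal_integral_eq_lintegral_ofReal]
        · apply Integrable.sub (integrable_const 1)
          have := hexp_int u hu'.le S hmS hSnn
          apply this.congr
          filter_upwards with ω
          rw [mul_comm]
        · filter_upwards [hSnn] with ω hω
          simp only [Pi.zero_apply]
          have : Real.exp (-(S ω * u)) ≤ 1 :=
            Real.exp_le_one_iff.mpr (neg_nonpos.mpr (mul_nonneg hω hu'.le))
          linarith
      rw [e2, ← ENNReal.ofReal_mul (one_sub_psi_nonneg hu')]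
      rfl
    have step4 : ∫⁻ u in Ioi (0:ℝ), ENNReal.ofReal (Gfun u)
        = ENNReal.ofReal (2 * Real.sqrt 2) := by
      rw [← Gfun_int_val.2]
      rw [MeasureTheory.ofReal_integral_eq_lintegral_ofReal Gfun_int_val.1]
      filter_upwards [ae_restrict_mem measurableSet_Ioi] with u hu
      simp only [Pi.zero_apply]
      have hu' : (0:ℝ) < u := hu
      exact mul_nonneg (one_sub_psi_nonneg hu') (Real.rpow_pos_of_pos hu' _).le
    rw [step1, step2, step3, step4]
  -- convert back to Bochner integral
  have hmain : ∫ ω, 2 * Real.sqrt Real.pi * Real.sqrt (S ω) = 2 * Real.sqrt 2 := by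
    have haesm : AEStronglyMeasurable (fun ω => 2 * Real.sqrt Real.pi * Real.sqrt (S ω)) ℙ :=
      ((Real.continuous_sqrt.measurable.comp hmS).const_mul _).aestronglyMeasurable
    have hnn : 0 ≤ᵐ[(ℙ : Measure Ω)] fun ω => 2 * Real.sqrt Real.pi * Real.sqrt (S ω) :=
      Eventually.of_forall fun ω => by simp only [Pi.zero_apply]; positivity
    rw [integral_eq_lintegral_of_nonneg_ae hnn haesm]
    rw [key, ENNReal.toReal_ofReal (by positivity)]
  have hfactor : ∫ ω, 2 * Real.sqrt Real.pi * Real.sqrt (S ω)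
      = 2 * Real.sqrt Real.pi * ∫ ω, Real.sqrt (S ω) := by
    exact MeasureTheory.integral_const_mul _ _
  have hpi : (0:ℝ) < Real.sqrt Real.pi := Real.sqrt_pos.mpr Real.pi_pos
  have hgoal : ∫ ω, Real.sqrt (S ω) = Real.sqrt 2 / Real.sqrt Real.pi := by
    rw [hfactor] at hmain
    field_simp at hmain ⊢
    linarith
  have : Real.sqrt (2 / Real.pi) = Real.sqrt 2 / Real.sqrt Real.pi :=
    Real.sqrt_div' 2 Real.pi_pos.le ▸ rfl
  rw [show (fun ω => Real.sqrt (T ω + T' ω)) = fun ω => Real.sqrt (S ω) from rfl]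
  rw [hgoal, Real.sqrt_div (by norm_num : (0:ℝ) ≤ 2)]
end

section
/- Let W₁, …, Wₙ be random variables whose joint characteristic function is E[exp(i Σⱼ λⱼ Wⱼ)] = [cosh(Σⱼ λⱼ) + (Σⱼ |λⱼ|)/(Σⱼ λⱼ) · sinh(Σⱼ λⱼ)]^{-1}. Then the vector (W₁−Wₙ, …, W_{n−1}−Wₙ) has the same law as (C⁽¹⁾_e − C⁽ⁿ⁾_e, …, C⁽ⁿ⁻¹⁾_e − C⁽ⁿ⁾_e), where C⁽¹⁾, …, C⁽ⁿ⁾ are independent standard Cauchy processes and e is an independent exponential random variable of parameter 1. In particular, E[exp(i Σ_{j<n} λⱼ(Wⱼ−Wₙ))] = [1 + Σ_{j<n}|λⱼ| + |Σ_{j<n} λⱼ|]^{-1} = ∫₀^∞ e^{-t} exp(−t Σ_{j<n}|λⱼ| − t|Σ_{j<n} λⱼ|) dt. -/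
open MeasureTheory ProbabilityTheory Set

open Filter Topology Complex in
private lemma winding_aux_tendsto_char (c s : ℝ) (hc : 0 ≤ c) :
    Tendsto (fun ε : ℝ => (((Real.cosh ε + (c + |ε - s|) / ε * Real.sinh ε : ℝ) : ℂ))⁻¹)
      (𝓝[>] (0:ℝ)) (𝓝 ((((1 + c + |s| : ℝ)) : ℂ)⁻¹)) := by
  have hsinh : Tendsto (fun ε : ℝ => Real.sinh ε / ε) (𝓝[≠] (0:ℝ)) (𝓝 1) := by
    have h := hasDerivAt_iff_tendsto_slope.mp (Real.hasDerivAt_sinh 0)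
    simp only [Real.cosh_zero] at h
    refine h.congr' ?_
    filter_upwards [self_mem_nhdsWithin] with x hx
    simp [slope, Real.sinh_zero, div_eq_inv_mul]
  have hsinh' : Tendsto (fun ε : ℝ => Real.sinh ε / ε) (𝓝[>] (0:ℝ)) (𝓝 1) :=
    hsinh.mono_left (nhdsWithin_mono _ (fun x hx => ne_of_gt hx))
  have hcosh : Tendsto (fun ε : ℝ => Real.cosh ε) (𝓝[>] (0:ℝ)) (𝓝 1) := by
    have := (Real.continuous_cosh.tendsto 0).mono_left (nhdsWithin_le_nhds (s := Ioi (0:ℝ)))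
    simpa using this
  have habs : Tendsto (fun ε : ℝ => c + |ε - s|) (𝓝[>] (0:ℝ)) (𝓝 (c + |s|)) := by
    have : Continuous fun ε : ℝ => c + |ε - s| := by continuity
    have := (this.tendsto 0).mono_left (nhdsWithin_le_nhds (s := Ioi (0:ℝ)))
    simpa using this
  have hg : Tendsto (fun ε : ℝ => Real.cosh ε + (c + |ε - s|) / ε * Real.sinh ε)
      (𝓝[>] (0:ℝ)) (𝓝 (1 + c + |s|)) := by
    have h2 : Tendsto (fun ε : ℝ => (c + |ε - s|) * (Real.sinh ε / ε))
        (𝓝[>] (0:ℝ)) (𝓝 ((c + |s|) * 1)) := habs.mul hsinh'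
    have h3 := hcosh.add h2
    have heq : (fun ε : ℝ => Real.cosh ε + (c + |ε - s|) / ε * Real.sinh ε)
        = fun ε : ℝ => Real.cosh ε + (c + |ε - s|) * (Real.sinh ε / ε) := by
      funext ε; ring
    rw [heq]
    convert h3 using 2
    ring
  have hne : (1 + c + |s| : ℝ) ≠ 0 := by positivity
  have hcont : ContinuousAt (fun x : ℝ => ((x : ℂ))⁻¹) (1 + c + |s|) := by
    apply ContinuousAt.inv₀
    · exact Complex.continuous_ofReal.continuousAt
    · exact_mod_cast hne
  exact hcont.tendsto.comp hg

/-- If `W₀, …, Wₙ` have joint characteristic function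
`[cosh(Σλⱼ) + (Σ|λⱼ|)/(Σλⱼ) sinh(Σλⱼ)]⁻¹`, then the differences `(Wⱼ − Wₙ)_{j<n}` are
distributed as differences of independent standard Cauchy processes evaluated at an
independent exponential time: their characteristic function is
`[1 + Σ_{j<n}|μⱼ| + |Σ_{j<n}μⱼ|]⁻¹ = ∫₀^∞ e^{−t} e^{−t(Σ|μⱼ| + |Σμⱼ|)} dt`. -/
theorem winding_differences_cauchy
    {Ω : Type*} [MeasureSpace Ω] [IsProbabilityMeasure (ℙ : Measure Ω)]
    (n : ℕ) (W : Fin (n + 1) → Ω → ℝ) (hW : ∀ j, Measurable (W j))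
    (hchar : ∀ lam : Fin (n + 1) → ℝ, (∑ j, lam j) ≠ 0 →
      ∫ ω, Complex.exp (Complex.I * ∑ j, (lam j : ℂ) * (W j ω : ℂ)) =
        (((Real.cosh (∑ j, lam j) +
            (∑ j, |lam j|) / (∑ j, lam j) * Real.sinh (∑ j, lam j) : ℝ) : ℂ))⁻¹) :
    ∀ μ : Fin n → ℝ,
      (∫ ω, Complex.exp (Complex.I *
          ∑ j, (μ j : ℂ) * ((W j.castSucc ω - W (Fin.last n) ω : ℝ) : ℂ)) =
        (((1 + ∑ j, |μ j| + |∑ j, μ j| : ℝ) : ℂ))⁻¹) ∧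
      ((1 + ∑ j, |μ j| + |∑ j, μ j| : ℝ)⁻¹ =
        ∫ t in Ioi (0 : ℝ),
          Real.exp (-t) * Real.exp (-(t * (∑ j, |μ j| + |∑ j, μ j|)))) := by
  intro μ
  open Filter Topology Complex in
  constructor
  · -- characteristic function part
    set s : ℝ := ∑ j, μ j with hs
    set c : ℝ := ∑ j, |μ j| with hc
    have hc0 : 0 ≤ c := Finset.sum_nonneg fun _ _ => abs_nonneg _
    -- the function being integrated in the goal
    set X : Ω → ℂ := fun ω => ∑ j, (μ j : ℂ) * ((W j.castSucc ω - W (Fin.last n) ω : ℝ) : ℂ)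
      with hX
    have hXmeas : Measurable X := by
      apply Finset.measurable_sum
      intro j _
      exact (measurable_const.mul (Complex.measurable_ofReal.comp
        ((hW j.castSucc).sub (hW (Fin.last n)))))
    have hYmeas : Measurable fun ω => ((W (Fin.last n) ω : ℝ) : ℂ) :=
      Complex.measurable_ofReal.comp (hW (Fin.last n))
    -- for each ε > 0, apply hchar
    have key : ∀ ε : ℝ, 0 < ε →
        ∫ ω, Complex.exp (Complex.I * (X ω + ε * ((W (Fin.last n) ω : ℝ) : ℂ))) =
          (((Real.cosh ε + (c + |ε - s|) / ε * Real.sinh ε : ℝ) : ℂ))⁻¹ := by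
      intro ε hε
      set lam : Fin (n + 1) → ℝ := Fin.snoc μ (ε - s) with hlam
      have hsum : (∑ j, lam j) = ε := by
        rw [Fin.sum_univ_castSucc]
        simp [hlam, Fin.snoc_castSucc, Fin.snoc_last, ← hs]
      have habs : (∑ j, |lam j|) = c + |ε - s| := by
        rw [Fin.sum_univ_castSucc]
        simp [hlam, Fin.snoc_castSucc, Fin.snoc_last, ← hc]
      have h := hchar lam (by rw [hsum]; exact ne_of_gt hε)
      rw [hsum, habs] at h
      rw [← h]
      congr 1
      funext ω
      congr 1
      congr 1
      rw [Fin.sum_univ_castSucc]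
      simp only [hlam, Fin.snoc_castSucc, Fin.snoc_last, hX]
      push_cast
      simp only [mul_sub, Finset.sum_sub_distrib, ← Finset.sum_mul]
      have hcast : ((s:ℝ):ℂ) = ∑ x : Fin n, ((μ x : ℝ) : ℂ) := by rw [hs]; push_cast; rfl
      rw [hcast]
      ring
    -- LHS limit via dominated convergence along 𝓝[>] 0
    have hLHS : Tendsto (fun ε : ℝ =>
        ∫ ω, Complex.exp (Complex.I * (X ω + ε * ((W (Fin.last n) ω : ℝ) : ℂ))))
        (𝓝[>] (0:ℝ)) (𝓝 (∫ ω, Complex.exp (Complex.I * X ω))) := by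
      apply tendsto_integral_filter_of_dominated_convergence (fun _ => (1 : ℝ))
      · filter_upwards with ε
        apply Measurable.aestronglyMeasurable
        apply Complex.measurable_exp.comp
        exact measurable_const.mul (hXmeas.add (measurable_const.mul hYmeas))
      · filter_upwards with ε
        filter_upwards with ω
        have : X ω + ε * ((W (Fin.last n) ω : ℝ) : ℂ) =
            ((∑ j, μ j * (W j.castSucc ω - W (Fin.last n) ω) + ε * W (Fin.last n) ω : ℝ) : ℂ) := by
          push_cast [hX]
          ring_nf
        rw [this]
        rw [mul_comm]
        rw [Complex.norm_exp_ofReal_mul_I]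
      · exact integrable_const 1
      · filter_upwards with ω
        have hcont : Continuous fun ε : ℝ =>
            Complex.exp (Complex.I * (X ω + ε * ((W (Fin.last n) ω : ℝ) : ℂ))) := by
          continuity
        have := (hcont.tendsto 0).mono_left (nhdsWithin_le_nhds (s := Ioi (0:ℝ)))
        simpa using this
    -- rewrite along key
    have hLHS' : Tendsto (fun ε : ℝ =>
        (((Real.cosh ε + (c + |ε - s|) / ε * Real.sinh ε : ℝ) : ℂ))⁻¹)
        (𝓝[>] (0:ℝ)) (𝓝 (∫ ω, Complex.exp (Complex.I * X ω))) := by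
      refine hLHS.congr' ?_
      filter_upwards [self_mem_nhdsWithin] with ε hε
      exact key ε hε
    have hRHS := winding_aux_tendsto_char c s hc0
    have hne : (𝓝[>] (0:ℝ)) ≠ ⊥ := (nhdsGT_neBot (0:ℝ)).ne'
    have := tendsto_nhds_unique (l := 𝓝[>] (0:ℝ)) hLHS' hRHS
    simpa [hX] using this
  · -- the explicit integral
    set a : ℝ := ∑ j, |μ j| + |∑ j, μ j| with ha
    have ha0 : 0 ≤ a := add_nonneg (Finset.sum_nonneg fun _ _ => abs_nonneg _) (abs_nonneg _)
    have hr : (0:ℝ) < 1 + a := by linarith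
    have h1 : ∫ t in Ioi (0:ℝ), Real.exp (-t) * Real.exp (-(t * a))
        = ∫ t in Ioi (0:ℝ), t ^ ((1:ℝ) - 1) * Real.exp (-((1 + a) * t)) := by
      refine setIntegral_congr_fun measurableSet_Ioi fun t ht => ?_
      rw [sub_self, Real.rpow_zero, one_mul, ← Real.exp_add]
      ring_nf
    rw [h1, Real.integral_rpow_mul_exp_neg_mul_Ioi one_pos hr, Real.Gamma_one,
      Real.rpow_one, mul_one, one_div]
    congr 1
    rw [ha]
    ring
end
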